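/- arXiv:math/0505239 — 9 statements merged into one kernel-verified Lean document; each statement's English description precedes it below -/
import Mathlib

section
/- For integers 1 ≤ k ≤ n, the polynomial ∏_{i=1}^{k} (1 - t^{2n-2k+2i})/(1 - t^i) is a polynomial in t with nonnegative integer coefficients (it is the Poincaré polynomial in t = uv of the isotropic Grassmannian Gr^ω(k,2n)). -/
open Polynomial Finset

/-- Gaussian binomial coefficient as a polynomial with natural coefficients. -/
noncomputable def gb : ℕ → ℕ → Polynomial ℕ
  | _, 0 => 1
  | 0, _+1 => 0
  | n+1, k+1 => gb n k + X^(k+1) * gb n (k+1)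
termination_by n k => n

@[simp] lemma gb_zero_right (n : ℕ) : gb n 0 = 1 := by cases n <;> rw [gb]

lemma gb_succ (n k : ℕ) : gb (n+1) (k+1) = gb n k + X^(k+1) * gb n (k+1) := by rw [gb]

lemma gb_zero : ∀ n k : ℕ, n < k → gb n k = 0
  | 0, k+1, _ => by rw [gb]
  | n+1, k+1, h => by
      have h1 : n < k := by omega
      rw [gb_succ, gb_zero n k h1, gb_zero n (k+1) (by omega)]
      simp

lemma pow_congr' {a b : ℕ} (h : a = b) : (1 - (X : Polynomial ℚ) ^ a) = 1 - X ^ b := by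
  rw [h]

lemma shift_prod (m j : ℕ) :
    (∏ i ∈ Finset.Icc 1 (j+1), (1 - (X : Polynomial ℚ) ^ (m + i))) =
      (1 - X ^ (m+1)) * ∏ i ∈ Finset.Icc 1 j, (1 - (X : Polynomial ℚ) ^ (m + 1 + i)) := by
  rw [← Finset.Ico_add_one_right_eq_Icc, ← Finset.Ico_add_one_right_eq_Icc, Finset.prod_Ico_eq_prod_range,
    Finset.prod_Ico_eq_prod_range]
  simp only [Nat.add_sub_cancel, Nat.succ_sub_one]
  rw [Finset.prod_range_succ']
  rw [mul_comm]
  congr 1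
  apply Finset.prod_congr rfl
  intro i _
  apply pow_congr'
  omega

lemma key : ∀ n k : ℕ, k ≤ n →
    (∏ i ∈ Finset.Icc 1 k, (1 - (X : Polynomial ℚ) ^ (n - k + i))) =
      (gb n k).map (Nat.castRingHom ℚ) * ∏ i ∈ Finset.Icc 1 k, (1 - (X : Polynomial ℚ) ^ i) := by
  intro n
  induction n with
  | zero =>
      intro k hk
      interval_cases k
      simp
  | succ n IH =>
      intro k hk
      match k with
      | 0 => simp
      | j+1 =>
        have hj : j ≤ n := by omega
        have hA : (∏ i ∈ Finset.Icc 1 (j+1), (1 - (X : Polynomial ℚ) ^ (n+1 - (j+1) + i))) =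
            (∏ i ∈ Finset.Icc 1 j, (1 - (X : Polynomial ℚ) ^ (n - j + i))) * (1 - X ^ (n+1)) := by
          rw [Finset.prod_Icc_succ_top (by omega)]
          congr 1
          · apply Finset.prod_congr rfl; intro i _; apply pow_congr'; omega
          · apply pow_congr'; omega
        rw [hA]
        have hB : (∏ i ∈ Finset.Icc 1 (j+1), (1 - (X : Polynomial ℚ) ^ i)) =
            (∏ i ∈ Finset.Icc 1 j, (1 - (X : Polynomial ℚ) ^ i)) * (1 - X ^ (j+1)) :=
          Finset.prod_Icc_succ_top (by omega) _
        rw [hB]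
        have IH1 := IH j hj
        rw [gb_succ]
        show (∏ i ∈ Finset.Icc 1 j, (1 - (X : Polynomial ℚ) ^ (n - j + i))) * (1 - X ^ (n+1)) =
          (gb n j + X^(j+1) * gb n (j+1)).map (Nat.castRingHom ℚ) *
            ((∏ i ∈ Finset.Icc 1 j, (1 - (X : Polynomial ℚ) ^ i)) * (1 - X ^ (j+1)))
        rw [Polynomial.map_add, Polynomial.map_mul, Polynomial.map_pow, Polynomial.map_X]
        by_cases hjn : j + 1 ≤ n
        · have IH2 := IH (j+1) hjn
          have hA' : (∏ i ∈ Finset.Icc 1 (j+1), (1 - (X : Polynomial ℚ) ^ (n - (j+1) + i))) =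
              (1 - X ^ (n-j)) * ∏ i ∈ Finset.Icc 1 j, (1 - (X : Polynomial ℚ) ^ (n - j + i)) := by
            rw [shift_prod (n - (j+1)) j]
            have e1 : n - (j+1) + 1 = n - j := by omega
            rw [e1]
          rw [hA', hB] at IH2
          have e : n + 1 = (j+1) + (n-j) := by omega
          rw [e, pow_add]
          linear_combination (1 - X^(j+1) : Polynomial ℚ) * IH1 + X^(j+1) * IH2
        · have hnj : n + 1 = j + 1 := by omega
          rw [gb_zero n (j+1) (by omega), hnj]
          simp only [Polynomial.map_zero, mul_zero, add_zero]
          linear_combination (1 - X^(j+1) : Polynomial ℚ) * IH1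
          
/-- For integers `1 ≤ k ≤ n`, the product `∏_{i=1}^{k} (1 - t^{2n-2k+2i})/(1 - t^i)`
is a polynomial in `t` with nonnegative integer coefficients (the Poincaré polynomial
of the isotropic Grassmannian `Gr^ω(k, 2n)`). -/
theorem stmt_0 (n k : ℕ) (hk : 1 ≤ k) (hkn : k ≤ n) :
    ∃ P : Polynomial ℕ,
      (∏ i ∈ Finset.Icc 1 k, (1 - (X : Polynomial ℚ) ^ (2 * n - 2 * k + 2 * i))) =
        P.map (Nat.castRingHom ℚ) * ∏ i ∈ Finset.Icc 1 k, (1 - (X : Polynomial ℚ) ^ i) := by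
  refine ⟨gb n k * ∏ i ∈ Finset.Icc 1 k, (1 + X ^ (n - k + i)), ?_⟩
  have hsplit : (∏ i ∈ Finset.Icc 1 k, (1 - (X : Polynomial ℚ) ^ (2 * n - 2 * k + 2 * i))) =
      (∏ i ∈ Finset.Icc 1 k, (1 - (X : Polynomial ℚ) ^ (n - k + i))) *
      (∏ i ∈ Finset.Icc 1 k, (1 + (X : Polynomial ℚ) ^ (n - k + i))) := by
    rw [← Finset.prod_mul_distrib]
    apply Finset.prod_congr rfl
    intro i _
    have e : 2 * n - 2 * k + 2 * i = (n - k + i) + (n - k + i) := by omega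
    rw [e, pow_add]
    ring
  rw [hsplit, key n k hkn, Polynomial.map_mul, Polynomial.map_prod]
  simp only [Polynomial.map_add, Polynomial.map_one, Polynomial.map_pow, Polynomial.map_X]
  ring
end

section
/- Let R = ℚ[a,b]/⟨a^{2n}, b^{2n}, ∑_{i=0}^{2n-1} a^{2n-1-i}b^i⟩ with the ℤ/2-action swapping a and b. Then the invariant subspace R^+ has ℚ-basis {a^i b^j + a^j b^i : 0 ≤ i ≤ j ≤ 2n-2}, and the map (i,j) ↦ (j+1,i) is a bijection from {(i,j) : 0 ≤ i ≤ j ≤ 2n-2} onto its complement in {(i,j) : 0 ≤ i ≤ 2n-1, 0 ≤ j ≤ 2n-2}. -/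
open Finset Polynomial

noncomputable def gpoly (n : ℕ) : Polynomial (AdjoinRoot (Polynomial.X ^ (2*n) : Polynomial ℚ)) :=
  ∑ i ∈ range (2*n), Polynomial.C ((AdjoinRoot.root (Polynomial.X ^ (2*n) : Polynomial ℚ))^i) * Polynomial.X^(2*n-1-i)

lemma gpoly_eq (n : ℕ) (hn : 1 ≤ n) : gpoly n = Polynomial.X^(2*n-1) +
    ∑ i ∈ range (2*n-1), Polynomial.C ((AdjoinRoot.root (Polynomial.X ^ (2*n) : Polynomial ℚ))^(i+1)) * Polynomial.X^(2*n-1-(i+1)) := by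
  unfold gpoly
  obtain ⟨m, hm⟩ : ∃ m, 2*n = m + 1 := ⟨2*n-1, by omega⟩
  rw [hm, Finset.sum_range_succ']
  simp only [pow_zero, map_one, one_mul, Nat.sub_zero, Nat.add_sub_cancel]
  abel

lemma gpoly_monic (n : ℕ) (hn : 1 ≤ n) : (gpoly n).Monic := by
  rw [gpoly_eq n hn]
  obtain ⟨m, hm⟩ : ∃ m, 2*n - 1 = m + 1 := ⟨2*n-2, by omega⟩
  rw [hm]
  apply Polynomial.monic_X_pow_add
  refine lt_of_le_of_lt (b := (m : WithBot ℕ))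
    ((Polynomial.degree_sum_le _ _).trans (Finset.sup_le fun i _ => ?_)) ?_
  · apply (Polynomial.degree_mul_le _ _).trans
    apply le_trans (add_le_add Polynomial.degree_C_le (Polynomial.degree_X_pow_le _))
    rw [zero_add]
    exact_mod_cast Nat.cast_le.mpr (by omega : m+1-(i+1) ≤ m)
  · exact_mod_cast Nat.cast_lt.mpr (Nat.lt_succ_self m)

lemma gpoly_degree (n : ℕ) (hn : 1 ≤ n) : (gpoly n).degree = (2*n-1 : ℕ) := by
  have : Nontrivial (AdjoinRoot (Polynomial.X ^ (2*n) : Polynomial ℚ)) :=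
    AdjoinRoot.nontrivial _ (by
      rw [Polynomial.degree_X_pow]; exact_mod_cast by omega)
  rw [gpoly_eq n hn]
  rw [Polynomial.degree_add_eq_left_of_degree_lt, Polynomial.degree_X_pow]
  rw [Polynomial.degree_X_pow]
  obtain ⟨m, hm⟩ : ∃ m, 2*n - 1 = m + 1 := ⟨2*n-2, by omega⟩
  rw [hm]
  refine lt_of_le_of_lt (b := (m : WithBot ℕ))
    ((Polynomial.degree_sum_le _ _).trans (Finset.sup_le fun i _ => ?_)) ?_
  · apply (Polynomial.degree_mul_le _ _).trans
    apply le_trans (add_le_add Polynomial.degree_C_le (Polynomial.degree_X_pow_le _))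
    rw [zero_add]
    exact_mod_cast Nat.cast_le.mpr (by omega : m+1-(i+1) ≤ m)
  · exact_mod_cast Nat.cast_lt.mpr (Nat.lt_succ_self m)

lemma gpoly_natDegree (n : ℕ) (hn : 1 ≤ n) : (gpoly n).natDegree = 2*n-1 :=
  Polynomial.natDegree_eq_of_degree_eq_some (gpoly_degree n hn)

/-- The ideal `⟨a^{2n}, b^{2n}, a^{2n-1} + a^{2n-2}b + ⋯ + b^{2n-1}⟩` in `ℚ[a,b]`
(where `a = X 0`, `b = X 1`). -/
noncomputable def incIdeal (n : ℕ) : Ideal (MvPolynomial (Fin 2) ℚ) :=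
  Ideal.span {MvPolynomial.X 0 ^ (2 * n), MvPolynomial.X 1 ^ (2 * n),
    ∑ i ∈ Finset.range (2 * n), MvPolynomial.X 0 ^ (2 * n - 1 - i) * MvPolynomial.X 1 ^ i}

section maps
variable (n : ℕ)

local notation "Sq" => AdjoinRoot (Polynomial.X ^ (2*n) : Polynomial ℚ)
local notation "Tq" => AdjoinRoot (gpoly n)
local notation "rootS" => AdjoinRoot.root (Polynomial.X ^ (2*n) : Polynomial ℚ)
local notation "rootT" => AdjoinRoot.root (gpoly n)
local notation "Rq" => MvPolynomial (Fin 2) ℚ ⧸ incIdeal n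
local notation "mkR" => Ideal.Quotient.mk (incIdeal n)

lemma rootS_pow : (rootS)^(2*n) = 0 := by
  rw [← AdjoinRoot.mk_X, ← map_pow, AdjoinRoot.mk_self]

lemma eval_g : ∑ i ∈ range (2*n),
    (AdjoinRoot.of (gpoly n) (rootS))^i * (rootT)^(2*n-1-i) = 0 := by
  have key : ∀ (f' : Sq →+* Tq) (x : Tq), Polynomial.eval₂ f' x (gpoly n) =
      ∑ i ∈ range (2*n), (f' (rootS))^i * x^(2*n-1-i) := by
    intro f' x
    show Polynomial.eval₂ f' x (∑ i ∈ range (2*n), Polynomial.C ((rootS)^i) * Polynomial.X^(2*n-1-i)) = _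
    rw [Polynomial.eval₂_finset_sum]
    simp [Polynomial.eval₂_mul, Polynomial.eval₂_C, Polynomial.eval₂_pow,
      Polynomial.eval₂_X, map_pow]
  have h := AdjoinRoot.eval₂_root (gpoly n)
  rw [key] at h
  simpa [map_pow] using h

lemma of_rootS_pow : (AdjoinRoot.of (gpoly n) (rootS))^(2*n) = 0 := by
  rw [← map_pow, rootS_pow, map_zero]

lemma rootT_pow : (rootT)^(2*n) = 0 := by
  have h := geom_sum₂_mul (AdjoinRoot.of (gpoly n) (rootS)) (rootT) (2*n)
  rw [eval_g, zero_mul, of_rootS_pow, zero_sub] at h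
  exact neg_eq_zero.mp h.symm

lemma eval₂_gpoly {B : Type} [CommRing B] (f : Sq →+* B) (x : B) :
    Polynomial.eval₂ f x (gpoly n) = ∑ i ∈ range (2*n), (f (rootS))^i * x^(2*n-1-i) := by
  unfold gpoly
  rw [Polynomial.eval₂_finset_sum]
  simp [Polynomial.eval₂_mul, Polynomial.eval₂_C, Polynomial.eval₂_pow,
    Polynomial.eval₂_X, map_pow]

noncomputable def phi : MvPolynomial (Fin 2) ℚ →+* Tq :=
  MvPolynomial.eval₂Hom (algebraMap ℚ Tq) ![rootT, AdjoinRoot.of (gpoly n) rootS]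

lemma phi_X0 : phi n (MvPolynomial.X 0) = rootT := by
  simp [phi]

lemma phi_X1 : phi n (MvPolynomial.X 1) = AdjoinRoot.of (gpoly n) rootS := by
  simp [phi]

lemma incIdeal_le_ker : incIdeal n ≤ RingHom.ker (phi n) := by
  rw [incIdeal, Ideal.span_le]
  rintro x (rfl | rfl | rfl)
  · simp [RingHom.mem_ker, map_pow, phi_X0, rootT_pow]
  · simp [RingHom.mem_ker, map_pow, phi_X1, of_rootS_pow]
  · simp only [RingHom.mem_ker, map_sum, map_mul, map_pow, phi_X0, phi_X1, SetLike.mem_coe]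
    rw [← eval_g n]
    exact Finset.sum_congr rfl fun i _ => mul_comm _ _

noncomputable def phi' : Rq →+* Tq :=
  Ideal.Quotient.lift (incIdeal n) (phi n) (fun a ha => incIdeal_le_ker n ha)

lemma mk_X1_pow : mkR (MvPolynomial.X 1 ^ (2*n)) = 0 := by
  rw [Ideal.Quotient.eq_zero_iff_mem, incIdeal]
  exact Ideal.subset_span (by simp)

lemma mk_X0_pow : mkR (MvPolynomial.X 0 ^ (2*n)) = 0 := by
  rw [Ideal.Quotient.eq_zero_iff_mem, incIdeal]
  exact Ideal.subset_span (by simp)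

lemma mk_h : mkR (∑ i ∈ Finset.range (2 * n),
    MvPolynomial.X 0 ^ (2 * n - 1 - i) * MvPolynomial.X 1 ^ i) = 0 := by
  rw [Ideal.Quotient.eq_zero_iff_mem, incIdeal]
  exact Ideal.subset_span (by simp)

noncomputable def psi1 : Sq →+* Rq :=
  AdjoinRoot.lift (algebraMap ℚ Rq) (mkR (MvPolynomial.X 1))
    (by rw [Polynomial.eval₂_pow, Polynomial.eval₂_X, ← map_pow, mk_X1_pow])

lemma psi1_rootS : psi1 n rootS = mkR (MvPolynomial.X 1) := AdjoinRoot.lift_root _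

noncomputable def psi : Tq →+* Rq :=
  AdjoinRoot.lift (psi1 n) (mkR (MvPolynomial.X 0))
    (by
      rw [eval₂_gpoly, ← mk_h n]
      rw [map_sum]
      refine Finset.sum_congr rfl fun i _ => ?_
      rw [psi1_rootS, map_mul, map_pow, map_pow, mul_comm])

lemma psi_rootT : psi n rootT = mkR (MvPolynomial.X 0) := AdjoinRoot.lift_root _

lemma psi_of : ∀ s, psi n (AdjoinRoot.of (gpoly n) s) = psi1 n s := fun _ => AdjoinRoot.lift_of _

lemma Sq_ext {B : Type} [CommRing B] [Algebra ℚ B] {f g : Sq →+* B}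
    (h : f rootS = g rootS) : f = g := by
  have key : f.comp (AdjoinRoot.mk _) = g.comp (AdjoinRoot.mk _) := by
    apply Polynomial.ringHom_ext'
    · exact Subsingleton.elim _ _
    · simpa [AdjoinRoot.mk_X] using h
  exact RingHom.ext fun x => AdjoinRoot.induction_on _ x fun p => RingHom.congr_fun key p

lemma Tq_ext {B : Type} [CommRing B] [Algebra ℚ B] {f g : Tq →+* B}
    (h1 : f rootT = g rootT)
    (h2 : f (AdjoinRoot.of (gpoly n) rootS) = g (AdjoinRoot.of (gpoly n) rootS)) : f = g := by
  have key : f.comp (AdjoinRoot.mk _) = g.comp (AdjoinRoot.mk _) := by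
    apply Polynomial.ringHom_ext'
    · exact Sq_ext n h2
    · simpa [AdjoinRoot.mk_X] using h1
  exact RingHom.ext fun x => AdjoinRoot.induction_on _ x fun p => RingHom.congr_fun key p

lemma Rq_ext {B : Type} [CommRing B] [Algebra ℚ B] {f g : Rq →+* B}
    (h0 : f (mkR (MvPolynomial.X 0)) = g (mkR (MvPolynomial.X 0)))
    (h1 : f (mkR (MvPolynomial.X 1)) = g (mkR (MvPolynomial.X 1))) : f = g := by
  have key : f.comp (Ideal.Quotient.mk (incIdeal n)) = g.comp (Ideal.Quotient.mk (incIdeal n)) := by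
    apply MvPolynomial.ringHom_ext
    · exact fun r => RingHom.congr_fun
        (Subsingleton.elim ((f.comp (Ideal.Quotient.mk (incIdeal n))).comp MvPolynomial.C)
          ((g.comp (Ideal.Quotient.mk (incIdeal n))).comp MvPolynomial.C)) r
    · intro i
      fin_cases i
      · exact h0
      · exact h1
  exact RingHom.ext fun x => by
    obtain ⟨p, rfl⟩ := Ideal.Quotient.mk_surjective x
    exact RingHom.congr_fun key p

lemma phi'_mk (p : MvPolynomial (Fin 2) ℚ) : phi' n (mkR p) = phi n p :=
  Ideal.Quotient.lift_mk _ _ _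

lemma phi'_psi_eq : (phi' n).comp (psi n) = RingHom.id _ := by
  apply Tq_ext n
  · rw [RingHom.comp_apply, psi_rootT, phi'_mk, phi_X0, RingHom.id_apply]
  · rw [RingHom.comp_apply, psi_of, psi1_rootS, phi'_mk, phi_X1, RingHom.id_apply]

lemma psi_phi'_eq : (psi n).comp (phi' n) = RingHom.id _ := by
  apply Rq_ext n
  · rw [RingHom.comp_apply, phi'_mk, phi_X0, psi_rootT, RingHom.id_apply]
  · rw [RingHom.comp_apply, phi'_mk, phi_X1, psi_of, psi1_rootS, RingHom.id_apply]

noncomputable def eL : Rq ≃ₗ[ℚ] Tq :=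
  LinearEquiv.ofLinear (phi' n).toRatAlgHom.toLinearMap (psi n).toRatAlgHom.toLinearMap
    (LinearMap.ext fun x => RingHom.congr_fun (phi'_psi_eq n) x)
    (LinearMap.ext fun x => RingHom.congr_fun (psi_phi'_eq n) x)

noncomputable def pbS : PowerBasis ℚ Sq := AdjoinRoot.powerBasis' (Polynomial.monic_X_pow _)

noncomputable def pbT (hn : 1 ≤ n) : PowerBasis Sq Tq := AdjoinRoot.powerBasis' (gpoly_monic n hn)

noncomputable def bigBasis (hn : 1 ≤ n) : Module.Basis (Fin (2*n) × Fin (2*n-1)) ℚ Rq :=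
  (((pbS n).basis.smulTower (pbT n hn).basis).map (eL n).symm).reindex
    (Equiv.prodCongr (finCongr (by simp [pbS])) (finCongr (by simp [pbT, gpoly_natDegree n hn])))

lemma eL_symm_apply (x : Tq) : (eL n).symm x = psi n x := rfl

lemma bigBasis_apply (hn : 1 ≤ n) (j : Fin (2*n)) (k : Fin (2*n-1)) :
    bigBasis n hn (j, k) = mkR (MvPolynomial.X 0 ^ (k:ℕ) * MvPolynomial.X 1 ^ (j:ℕ)) := by
  rw [bigBasis, Module.Basis.reindex_apply, Module.Basis.map_apply]
  simp only [Equiv.prodCongr_symm, Equiv.prodCongr_apply, Prod.map]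
  rw [Module.Basis.smulTower_apply]
  rw [PowerBasis.basis_eq_pow, PowerBasis.basis_eq_pow, eL_symm_apply]
  rw [Algebra.smul_def, AdjoinRoot.algebraMap_eq, map_mul, map_pow, map_pow]
  rw [psi_of, map_pow]
  simp only [pbS, pbT, AdjoinRoot.powerBasis'_gen]
  rw [psi1_rootS, psi_rootT]
  rw [map_mul, map_pow, map_pow]
  norm_num [mul_comm]
  exact mul_comm _ _

lemma m_X1_zero (u w : ℕ) (hw : 2*n ≤ w) : mkR (MvPolynomial.X 0 ^ u * MvPolynomial.X 1 ^ w) = 0 := by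
  obtain ⟨d, rfl⟩ : ∃ d, w = 2*n + d := ⟨w - 2*n, by omega⟩
  rw [pow_add, ← mul_assoc, map_mul, map_mul, mk_X1_pow, mul_zero, zero_mul]

lemma sum_mul_rel (s : ℕ) : ∑ i ∈ range (2*n),
    mkR (MvPolynomial.X 0 ^ (2*n-1-i) * MvPolynomial.X 1 ^ (i+s)) = 0 := by
  have h0 : mkR ((∑ i ∈ Finset.range (2 * n),
      MvPolynomial.X 0 ^ (2 * n - 1 - i) * MvPolynomial.X 1 ^ i) * MvPolynomial.X 1 ^ s) = 0 := by
    rw [map_mul, mk_h, zero_mul]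
  rw [Finset.sum_mul, map_sum] at h0
  rw [← h0]
  refine Finset.sum_congr rfl fun i _ => ?_
  rw [mul_assoc, ← pow_add]

lemma rel (s : ℕ) (hs : s ≤ 2*n-2) (hn : 1 ≤ n) :
    mkR (MvPolynomial.X 0 ^ (2*n-1) * MvPolynomial.X 1 ^ s)
      + mkR (MvPolynomial.X 0 ^ s * MvPolynomial.X 1 ^ (2*n-1))
    = -∑ i ∈ range (2*n-2-s),
        mkR (MvPolynomial.X 0 ^ (2*n-2-i) * MvPolynomial.X 1 ^ (i+1+s)) := by
  have hA : ∑ i ∈ range (2*n - s),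
      mkR (MvPolynomial.X 0 ^ (2*n-1-i) * MvPolynomial.X 1 ^ (i+s)) = 0 := by
    rw [← sum_mul_rel n s]
    apply Finset.sum_subset (Finset.range_subset_range.mpr (by omega))
    intro i _ hi
    simp only [Finset.mem_range, not_lt] at hi
    exact m_X1_zero n _ _ (by omega)
  rw [show 2*n - s = (2*n-2-s) + 1 + 1 by omega, Finset.sum_range_succ,
    Finset.sum_range_succ'] at hA
  have e1 : 2*n-1-(2*n-2-s+1) = s := by omega
  have e2 : 2*n-2-s+1+s = 2*n-1 := by omega
  have e3 : 2*n-1-0 = 2*n-1 := by omega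
  have e4 : (0:ℕ)+s = s := by omega
  rw [e1, e2, e3, e4] at hA
  have : ∑ i ∈ range (2*n-2-s),
      mkR (MvPolynomial.X 0 ^ (2*n-1-(i+1)) * MvPolynomial.X 1 ^ (i+1+s))
      = ∑ i ∈ range (2*n-2-s),
      mkR (MvPolynomial.X 0 ^ (2*n-2-i) * MvPolynomial.X 1 ^ (i+1+s)) := by
    refine Finset.sum_congr rfl fun i hi => ?_
    have e : 2*n-1-(i+1) = 2*n-2-i := by omega
    rw [e]
  rw [this] at hA
  linear_combination hA

noncomputable def vfam : {p : ℕ × ℕ // p.1 ≤ p.2 ∧ p.2 ≤ 2 * n - 2} → Rq := fun p =>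
  mkR (MvPolynomial.X 0 ^ p.1.1 * MvPolynomial.X 1 ^ p.1.2 +
    MvPolynomial.X 0 ^ p.1.2 * MvPolynomial.X 1 ^ p.1.1)

lemma pair_mem (u w : ℕ) (hu : u ≤ 2*n-2) (hw : w ≤ 2*n-2) :
    mkR (MvPolynomial.X 0 ^ u * MvPolynomial.X 1 ^ w)
      + mkR (MvPolynomial.X 0 ^ w * MvPolynomial.X 1 ^ u)
      ∈ Submodule.span ℚ (Set.range (vfam n)) := by
  rcases le_total u w with h | h
  · rw [← map_add]
    exact Submodule.subset_span ⟨⟨(u, w), ⟨h, hw⟩⟩, rfl⟩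
  · rw [← map_add, add_comm]
    exact Submodule.subset_span ⟨⟨(w, u), ⟨h, hu⟩⟩, rfl⟩

lemma sym_mem (hn : 1 ≤ n) (u w : ℕ) (hu : u ≤ 2*n-2) (hw : w ≤ 2*n-1) :
    mkR (MvPolynomial.X 0 ^ u * MvPolynomial.X 1 ^ w)
      + mkR (MvPolynomial.X 0 ^ w * MvPolynomial.X 1 ^ u)
      ∈ Submodule.span ℚ (Set.range (vfam n)) := by
  rcases Nat.lt_or_ge w (2*n-1) with h | h
  · exact pair_mem n u w hu (by omega)
  · have hw' : w = 2*n-1 := by omega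
    subst hw'
    rw [add_comm, rel n u hu hn]
    set W := ∑ i ∈ range (2*n-2-u),
        mkR (MvPolynomial.X 0 ^ (2*n-2-i) * MvPolynomial.X 1 ^ (i+1+u)) with hW
    have hWrev : W = ∑ i ∈ range (2*n-2-u),
        mkR (MvPolynomial.X 0 ^ (i+1+u) * MvPolynomial.X 1 ^ (2*n-2-i)) := by
      rw [hW, ← Finset.sum_range_reflect]
      refine Finset.sum_congr rfl fun i hi => ?_
      simp only [Finset.mem_range] at hi
      have e1 : 2*n-2-(2*n-2-u-1-i) = i+1+u := by omega
      have e2 : 2*n-2-u-1-i+1+u = 2*n-2-i := by omega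
      rw [e1, e2]
    have h2W : W + W ∈ Submodule.span ℚ (Set.range (vfam n)) := by
      nth_rewrite 2 [hWrev]
      rw [← Finset.sum_add_distrib]
      refine Submodule.sum_mem _ fun i hi => ?_
      simp only [Finset.mem_range] at hi
      exact pair_mem n _ _ (by omega) (by omega)
    have hWmem : W ∈ Submodule.span ℚ (Set.range (vfam n)) := by
      have : W = (2⁻¹ : ℚ) • (W + W) := by
        rw [← two_smul ℚ W, smul_smul]
        norm_num
      rw [this]
      exact Submodule.smul_mem _ _ h2W
    exact Submodule.neg_mem _ hWmem

lemma bigBasis_apply' (hn : 1 ≤ n) (j k : ℕ) (hj : j < 2*n) (hk : k < 2*n-1) :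
    bigBasis n hn (⟨j, hj⟩, ⟨k, hk⟩)
      = mkR (MvPolynomial.X 0 ^ k * MvPolynomial.X 1 ^ j) :=
  bigBasis_apply n hn ⟨j, hj⟩ ⟨k, hk⟩

lemma coord_vfam (hn : 1 ≤ n) (i j : ℕ) (hij : i ≤ j) (hj : j ≤ 2*n-2)
    (i' j' : ℕ) (h1 : i' ≤ j') (h2 : j' ≤ 2*n-2) :
    (bigBasis n hn).coord (⟨j, by omega⟩, ⟨i, by omega⟩) (vfam n ⟨(i',j'), ⟨h1,h2⟩⟩)
      = (if j' = j ∧ i' = i then 1 else 0) + (if i' = j ∧ j' = i then 1 else 0) := by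
  show (bigBasis n hn).coord _ (mkR (MvPolynomial.X 0 ^ i' * MvPolynomial.X 1 ^ j' +
    MvPolynomial.X 0 ^ j' * MvPolynomial.X 1 ^ i')) = _
  rw [map_add (Ideal.Quotient.mk (incIdeal n))]
  rw [← bigBasis_apply' n hn j' i' (by omega) (by omega),
    ← bigBasis_apply' n hn i' j' (by omega) (by omega)]
  rw [map_add, Module.Basis.coord_apply, Module.Basis.coord_apply, Module.Basis.repr_self, Module.Basis.repr_self,
    Finsupp.single_apply, Finsupp.single_apply]
  congr 1 <;> simp [Prod.ext_iff, Fin.ext_iff]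

lemma indep (hn : 1 ≤ n) : LinearIndependent ℚ (vfam n) := by
  rw [linearIndependent_iff']
  intro s f hsum q hq
  obtain ⟨⟨i, j⟩, hij, hj⟩ := q
  set L := (bigBasis n hn).coord (⟨j, by omega⟩, ⟨i, by omega⟩) with hL
  have hsum' : ∑ p ∈ s, f p • L (vfam n p) = 0 := by
    have h' := congrArg L hsum
    rw [map_sum, map_zero] at h'
    simpa only [map_smul] using h'
  rw [Finset.sum_eq_single_of_mem _ hq (fun p hp hpq => ?_)] at hsum'
  · rw [hL, coord_vfam n hn i j hij hj i j hij hj] at hsum'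
    simp only [and_self, if_true] at hsum'
    rcases smul_eq_zero.mp hsum' with h0 | h0
    · exact h0
    · split_ifs at h0 <;> norm_num at h0
  · obtain ⟨⟨i', j'⟩, h1, h2⟩ := p
    rw [hL, coord_vfam n hn i j hij hj i' j' h1 h2]
    have hne : ¬(j' = j ∧ i' = i) := fun hc => hpq (by
      apply Subtype.ext; simp [hc.1, hc.2])
    have hne2 : ¬(i' = j ∧ j' = i) := fun hc => by
      have : i' = i ∧ j' = j := by omega
      exact hpq (by apply Subtype.ext; simp [this.1, this.2])
    rw [if_neg hne, if_neg hne2]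
    simp

lemma sigma_m (σ : Rq →ₐ[ℚ] Rq)
    (hσa : σ (mkR (MvPolynomial.X 0)) = mkR (MvPolynomial.X 1))
    (hσb : σ (mkR (MvPolynomial.X 1)) = mkR (MvPolynomial.X 0)) (u w : ℕ) :
    σ (mkR (MvPolynomial.X 0 ^ u * MvPolynomial.X 1 ^ w))
      = mkR (MvPolynomial.X 0 ^ w * MvPolynomial.X 1 ^ u) := by
  rw [map_mul, map_pow, map_pow, map_mul, map_pow, map_pow, hσa, hσb, mul_comm,
    ← map_pow, ← map_pow, ← map_mul]

lemma span_eq (hn : 1 ≤ n) (σ : Rq →ₐ[ℚ] Rq)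
    (hσa : σ (mkR (MvPolynomial.X 0)) = mkR (MvPolynomial.X 1))
    (hσb : σ (mkR (MvPolynomial.X 1)) = mkR (MvPolynomial.X 0)) :
    Submodule.span ℚ (Set.range (vfam n)) = LinearMap.eqLocus σ.toLinearMap LinearMap.id := by
  apply le_antisymm
  · rw [Submodule.span_le]
    rintro _ ⟨⟨⟨i, j⟩, hij, hj⟩, rfl⟩
    rw [SetLike.mem_coe, LinearMap.mem_eqLocus]
    show σ _ = _
    rw [LinearMap.id_apply]
    show σ (mkR _) = _
    rw [map_add (Ideal.Quotient.mk (incIdeal n)), map_add σ,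
      sigma_m n σ hσa hσb, sigma_m n σ hσa hσb, add_comm,
      ← map_add (Ideal.Quotient.mk (incIdeal n))]
    rfl
  · intro x hx
    rw [LinearMap.mem_eqLocus] at hx
    have hσx : σ x = x := hx
    have hrepr := (bigBasis n hn).sum_repr x
    have hsum2 : x + σ x = ∑ p, ((bigBasis n hn).repr x) p •
        ((bigBasis n hn) p + σ ((bigBasis n hn) p)) := by
      simp only [smul_add]
      rw [Finset.sum_add_distrib]
      congr 1
      · exact hrepr.symm
      · conv_lhs => rw [← hrepr]
        rw [map_sum]
        simp only [map_smul]
    have hxG : x + σ x ∈ Submodule.span ℚ (Set.range (vfam n)) := by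
      rw [hsum2]
      refine Submodule.sum_mem _ fun p _ => ?_
      obtain ⟨jF, kF⟩ := p
      refine Submodule.smul_mem _ _ ?_
      rw [bigBasis_apply n hn jF kF, sigma_m n σ hσa hσb]
      exact sym_mem n hn kF jF (by omega) (by omega)
    have hx2 : x = (2⁻¹ : ℚ) • (x + σ x) := by
      rw [hσx, ← two_smul ℚ x, smul_smul]
      norm_num
    rw [hx2]
    exact Submodule.smul_mem _ _ hxG

end maps

/-- Let `R = ℚ[a,b]/⟨a^{2n}, b^{2n}, ∑ a^{2n-1-i}b^i⟩` with the `ℤ/2`-action swapping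
`a` and `b` (any `ℚ`-algebra map `σ` with `σa = b`, `σb = a`). The invariant subspace
`R⁺` has ℚ-basis `{aⁱbʲ + aʲbⁱ : 0 ≤ i ≤ j ≤ 2n-2}`, and `(i,j) ↦ (j+1,i)` is a
bijection from `{(i,j) : 0 ≤ i ≤ j ≤ 2n-2}` onto its complement in
`{(i,j) : 0 ≤ i ≤ 2n-1, 0 ≤ j ≤ 2n-2}`. -/
theorem stmt_2 (n : ℕ) (hn : 1 ≤ n)
    (σ : (MvPolynomial (Fin 2) ℚ ⧸ incIdeal n) →ₐ[ℚ] (MvPolynomial (Fin 2) ℚ ⧸ incIdeal n))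
    (hσa : σ (Ideal.Quotient.mk (incIdeal n) (MvPolynomial.X 0)) =
      Ideal.Quotient.mk (incIdeal n) (MvPolynomial.X 1))
    (hσb : σ (Ideal.Quotient.mk (incIdeal n) (MvPolynomial.X 1)) =
      Ideal.Quotient.mk (incIdeal n) (MvPolynomial.X 0)) :
    (LinearIndependent ℚ (fun p : {p : ℕ × ℕ // p.1 ≤ p.2 ∧ p.2 ≤ 2 * n - 2} =>
        Ideal.Quotient.mk (incIdeal n)
          (MvPolynomial.X 0 ^ p.1.1 * MvPolynomial.X 1 ^ p.1.2 +
            MvPolynomial.X 0 ^ p.1.2 * MvPolynomial.X 1 ^ p.1.1)) ∧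
      Submodule.span ℚ (Set.range (fun p : {p : ℕ × ℕ // p.1 ≤ p.2 ∧ p.2 ≤ 2 * n - 2} =>
        Ideal.Quotient.mk (incIdeal n)
          (MvPolynomial.X 0 ^ p.1.1 * MvPolynomial.X 1 ^ p.1.2 +
            MvPolynomial.X 0 ^ p.1.2 * MvPolynomial.X 1 ^ p.1.1))) =
        LinearMap.eqLocus σ.toLinearMap LinearMap.id) ∧
    Set.BijOn (fun p : ℕ × ℕ => (p.2 + 1, p.1))
      {p : ℕ × ℕ | p.1 ≤ p.2 ∧ p.2 ≤ 2 * n - 2}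
      ({p : ℕ × ℕ | p.1 ≤ 2 * n - 1 ∧ p.2 ≤ 2 * n - 2} \
        {p : ℕ × ℕ | p.1 ≤ p.2 ∧ p.2 ≤ 2 * n - 2}) := by
  refine ⟨⟨indep n hn, span_eq n hn σ hσa hσb⟩, ?_, ?_, ?_⟩
  · rintro ⟨i, j⟩ ⟨hij, hj⟩
    simp only [Set.mem_diff, Set.mem_setOf_eq]
    constructor
    · constructor <;> omega
    · rintro ⟨h1, h2⟩
      omega
  · rintro ⟨i, j⟩ hp ⟨i', j'⟩ hq h
    simp only [Prod.mk.injEq] at h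
    simp [Prod.ext_iff]
    omega
  · rintro ⟨u, w⟩ ⟨⟨hu, hw⟩, hnot⟩
    simp only [Set.mem_setOf_eq, not_and, not_le] at hnot
    have hwu : w < u := by
      rcases Nat.lt_or_ge w u with h | h
      · exact h
      · exact absurd (hnot h) (by omega)
    refine ⟨(w, u - 1), ⟨by omega, by omega⟩, ?_⟩
    show ((u-1+1 : ℕ), w) = (u, w)
    rw [Nat.sub_add_cancel (by omega)]
end

section
/- For any n ≥ 2 and any (2n-1)-th root of unity α ≠ 1, the polynomial s(t) defined as the expression in equation (12) of the paper evaluates at α to s(α) = -α(1 - α^{-1})(1 - α³)²/(1 + α). In particular, if 3 does not divide 2n-1 then s(α) ≠ 0 for every (2n-1)-th root of unity α ≠ 1. -/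
open Polynomial Finset

set_option maxHeartbeats 2000000

/-- The rational function `s(t)` of equation (12) of the paper. -/
noncomputable def sFun (n : ℕ) : RatFunc ℚ :=
  let T : RatFunc ℚ := RatFunc.X
  (1 - T) ^ 2 * (1 - T ^ (4 * n - 1)) * ((1 - T ^ 3) / (1 - T)) ^ 2 *
      (∏ i ∈ Finset.Icc 1 3, (1 - T ^ (2 * n + 2 * i - 4)) / (1 - T ^ i))
    - (1 - T) ^ 2 * (1 - T ^ (4 * n - 1)) * ((1 - T ^ 2) / (1 - T)) *
        ((1 - T ^ (2 * n - 2)) / (1 - T)) *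
        (∏ i ∈ Finset.Icc 1 2, (1 - T ^ (2 * n - 2 + 2 * i)) / (1 - T ^ i))
    - (1 - T) ^ 2 * (1 - T ^ (6 * n)) * ((1 - T ^ 2) / (1 - T)) *
        ((1 - T ^ (2 * n - 2)) / (1 - T)) *
        (∏ i ∈ Finset.Icc 1 2, (1 - T ^ (2 * n - 2 + 2 * i)) / (1 - T ^ i))
    + (1 - T) ^ 3 * ((1 - T ^ 2) / (1 - T)) * ((1 - T ^ (2 * n - 2)) / (1 - T)) *
        (∏ i ∈ Finset.Icc 1 2, (1 - T ^ (2 * n - 2 + 2 * i)) / (1 - T ^ i))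

/-- Generic clearing-of-denominators identity in a field. -/
lemma sAux (K : Type*) [Field K] (T a b c d e : K)
    (h1 : 1 - T ≠ 0) (h2 : 1 - T^2 ≠ 0) (h3 : 1 - T^3 ≠ 0) :
    ((1 - T) ^ 2 * (1 - d) * ((1 - T ^ 3) / (1 - T)) ^ 2 *
      ((1 - a) / (1 - T ^ 1) *
        ((1 - b) / (1 - T ^ 2) * ((1 - c) / (1 - T ^ 3)))) -
     (1 - T) ^ 2 * (1 - d) * ((1 - T ^ 2) / (1 - T)) * ((1 - a) / (1 - T)) *
      ((1 - b) / (1 - T ^ 1) * ((1 - c) / (1 - T ^ 2))) -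
     (1 - T) ^ 2 * (1 - e) * ((1 - T ^ 2) / (1 - T)) * ((1 - a) / (1 - T)) *
      ((1 - b) / (1 - T ^ 1) * ((1 - c) / (1 - T ^ 2))) +
     (1 - T) ^ 3 * ((1 - T ^ 2) / (1 - T)) * ((1 - a) / (1 - T)) *
      ((1 - b) / (1 - T ^ 1) * ((1 - c) / (1 - T ^ 2)))) *
    ((1 - T) * (1 - T ^ 2)) =
    (1 - a) * (1 - b) * (1 - c) *
      ((1 - T ^ 3) * (1 - d) - (1 - T ^ 2) * (1 - d)
        - (1 - T ^ 2) * (1 - e) + (1 - T) * (1 - T ^ 2)) := by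
  simp only [pow_one, div_pow, div_div, div_mul_eq_mul_div, mul_div_assoc']
  rw [div_sub_div _ _ (by apply_rules [mul_ne_zero, pow_ne_zero]) (by apply_rules [mul_ne_zero, pow_ne_zero]),
      div_sub_div _ _ (by apply_rules [mul_ne_zero, pow_ne_zero]) (by apply_rules [mul_ne_zero, pow_ne_zero]),
      div_add_div _ _ (by apply_rules [mul_ne_zero, pow_ne_zero]) (by apply_rules [mul_ne_zero, pow_ne_zero]),
      div_mul_eq_mul_div, div_eq_iff (by apply_rules [mul_ne_zero, pow_ne_zero])]
  ring

/-- For `n ≥ 2` and any `(2n-1)`-th root of unity `α ≠ 1`, the polynomial `s(t)`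
evaluates to `s(α) = -α(1-α⁻¹)(1-α³)²/(1+α)`; in particular if `3 ∤ 2n-1` then
`s(α) ≠ 0` for every such `α`. -/
theorem stmt_4 (n : ℕ) (hn : 2 ≤ n) (s : Polynomial ℚ)
    (hs : algebraMap (Polynomial ℚ) (RatFunc ℚ) s = sFun n) :
    (∀ α : ℂ, α ^ (2 * n - 1) = 1 → α ≠ 1 →
        Polynomial.aeval α s = -α * (1 - α⁻¹) * (1 - α ^ 3) ^ 2 / (1 + α)) ∧
    (¬ (3 ∣ (2 * n - 1)) → ∀ α : ℂ, α ^ (2 * n - 1) = 1 → α ≠ 1 →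
        Polynomial.aeval α s ≠ 0) := by
  obtain ⟨m, rfl⟩ : ∃ m, n = m + 2 := ⟨n - 2, by omega⟩
  have hinj : Function.Injective (algebraMap (Polynomial ℚ) (RatFunc ℚ)) :=
    IsFractionRing.injective _ _
  have hXk : ∀ k : ℕ, k ≠ 0 → (1 : RatFunc ℚ) - RatFunc.X ^ k ≠ 0 := by
    intro k hk h
    have h1 : (RatFunc.X : RatFunc ℚ) ^ k = 1 := (sub_eq_zero.mp h).symm
    have h2 : (X : Polynomial ℚ) ^ k = 1 := by
      apply hinj; simpa using h1
    have := congrArg natDegree h2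
    simp [natDegree_X_pow] at this
    exact hk this
  -- the key polynomial identity
  have hD : s * ((1 - X) * (1 - X ^ 2)) =
      (1 - X ^ (2*m+2)) * (1 - X ^ (2*m+4)) * (1 - X ^ (2*m+6)) *
      ((1 - X ^ 3) * (1 - X ^ (4*m+7)) - (1 - X ^ 2) * (1 - X ^ (4*m+7))
        - (1 - X ^ 2) * (1 - X ^ (6*m+12)) + (1 - X) * (1 - X ^ 2)) := by
    apply hinj
    rw [map_mul, hs]
    simp only [sFun]
    rw [show (Finset.Icc 1 3 : Finset ℕ) = {1,2,3} from by decide,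
        show (Finset.Icc 1 2 : Finset ℕ) = {1,2} from by decide]
    rw [Finset.prod_insert (by decide), Finset.prod_insert (by decide), Finset.prod_singleton,
        Finset.prod_insert (by decide), Finset.prod_singleton]
    rw [show 4*(m+2)-1 = 4*m+7 from by omega,
        show 2*(m+2)+2*1-4 = 2*m+2 from by omega,
        show 2*(m+2)+2*2-4 = 2*m+4 from by omega,
        show 2*(m+2)+2*3-4 = 2*m+6 from by omega,
        show 2*(m+2)-2 = 2*m+2 from by omega,
        show 2*m+2+2*1 = 2*m+4 from by omega,
        show 2*m+2+2*2 = 2*m+6 from by omega,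
        show 6*(m+2) = 6*m+12 from by omega]
    simp only [map_mul, map_sub, map_add, map_one, map_pow, RatFunc.algebraMap_X]
    exact sAux (RatFunc ℚ) RatFunc.X (RatFunc.X ^ (2*m+2)) (RatFunc.X ^ (2*m+4))
      (RatFunc.X ^ (2*m+6)) (RatFunc.X ^ (4*m+7)) (RatFunc.X ^ (6*m+12))
      (by simpa using hXk 1 one_ne_zero) (by simpa using hXk 2 two_ne_zero) (by simpa using hXk 3 three_ne_zero)
  have key : ∀ α : ℂ, α ^ (2 * (m+2) - 1) = 1 → α ≠ 1 →
      Polynomial.aeval α s = -α * (1 - α⁻¹) * (1 - α ^ 3) ^ 2 / (1 + α) := by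
    intro α hα hα1
    have hα' : α ^ (2*m+3) = 1 := by
      rw [show 2*m+3 = 2*(m+2)-1 from by omega]; exact hα
    have hα0 : α ≠ 0 := by
      rintro rfl; simp at hα'
    have hne1 : (1:ℂ) - α ≠ 0 := sub_ne_zero.mpr (Ne.symm hα1)
    have hnem1 : (1:ℂ) + α ≠ 0 := by
      intro h
      have hm : α = -1 := by linear_combination h
      rw [hm] at hα'
      rw [show (2*m+3 : ℕ) = 2*(m+1)+1 from by omega, pow_succ, pow_mul] at hα'
      norm_num at hα'
    have h12 : (1:ℂ) - α^2 ≠ 0 := by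
      intro h
      have h' : (1 - α) * (1 + α) = 0 := by linear_combination h
      rcases mul_eq_zero.mp h' with h'' | h''
      · exact hne1 h''
      · exact hnem1 h''
    have hinv : α⁻¹ = α ^ (2*m+2) := by
      refine inv_eq_of_mul_eq_one_right ?_
      calc α * α ^ (2*m+2) = α ^ (2*m+3) := by ring
      _ = 1 := hα'
    have e4 : α ^ (2*m+4) = α := by
      calc α ^ (2*m+4) = α ^ (2*m+3) * α := by ring
      _ = α := by rw [hα', one_mul]
    have e6 : α ^ (2*m+6) = α ^ 3 := by
      calc α ^ (2*m+6) = α ^ (2*m+3) * α ^ 3 := by ring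
      _ = α ^ 3 := by rw [hα', one_mul]
    have e47 : α ^ (4*m+7) = α := by
      calc α ^ (4*m+7) = (α ^ (2*m+3))^2 * α := by ring
      _ = α := by rw [hα', one_pow, one_mul]
    have e612 : α ^ (6*m+12) = α ^ 3 := by
      calc α ^ (6*m+12) = (α ^ (2*m+3))^3 * α ^ 3 := by ring
      _ = α ^ 3 := by rw [hα', one_pow, one_mul]
    have hEq := congrArg (Polynomial.aeval α) hD
    simp only [map_mul, map_sub, map_add, map_one, map_pow, Polynomial.aeval_X] at hEq
    rw [e4, e6, e47, e612] at hEq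
    rw [hinv, eq_div_iff hnem1]
    apply mul_right_cancel₀ (pow_ne_zero 2 hne1)
    linear_combination hEq
  refine ⟨key, ?_⟩
  intro h3 α hα hα1
  rw [key α hα hα1]
  have hα' : α ^ (2*m+3) = 1 := by
    rw [show 2*m+3 = 2*(m+2)-1 from by omega]; exact hα
  have hα0 : α ≠ 0 := by rintro rfl; simp at hα'
  have hnem1 : (1:ℂ) + α ≠ 0 := by
    intro h
    have hm : α = -1 := by linear_combination h
    rw [hm] at hα'
    rw [show (2*m+3 : ℕ) = 2*(m+1)+1 from by omega, pow_succ, pow_mul] at hα'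
    norm_num at hα'
  have h3' : ¬ (3 ∣ (2*m+3)) := by
    intro hd; apply h3
    rw [show 2*(m+2)-1 = 2*m+3 from by omega]; exact hd
  have hα3 : α ^ 3 ≠ 1 := by
    intro hc
    have d1 : orderOf α ∣ 3 := orderOf_dvd_of_pow_eq_one hc
    have d2 : orderOf α ∣ 2*m+3 := orderOf_dvd_of_pow_eq_one hα'
    have hcop : Nat.Coprime 3 (2*m+3) := (Nat.Prime.coprime_iff_not_dvd (by norm_num)).mpr h3'
    have hdd : orderOf α ∣ Nat.gcd 3 (2*m+3) := Nat.dvd_gcd d1 d2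
    rw [hcop] at hdd
    exact hα1 (orderOf_eq_one_iff.mp (Nat.dvd_one.mp hdd))
  apply div_ne_zero _ hnem1
  refine mul_ne_zero (mul_ne_zero (neg_ne_zero.mpr hα0) ?_) (pow_ne_zero _ ?_)
  · exact sub_ne_zero.mpr fun h => hα1 (inv_eq_one.mp h.symm)
  · exact sub_ne_zero.mpr fun h => hα3 h.symm
end

section
/- Let n ≥ 2 with 3 dividing n+1. Then for every primitive third root of unity α one has s(α) = 0, while for every (2n-1)-th root of unity α with α ≠ 1 and α³ ≠ 1 one has s(α) ≠ 0. Consequently, the GCD of 1 - t^{2n-1} and s(t) in ℚ[t] is 1 - t³. -/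
open Polynomial Finset

/-- The polynomial obtained from `sFun` by clearing the denominators
`(1-t)^3 (1-t^2)`. -/
noncomputable def Cpoly (n : ℕ) : Polynomial ℚ :=
  ((1 - X) ^ 2 * (1 - X ^ (4 * n - 1)) * (1 - X ^ 3) * ((1 - X ^ (2 * n - 2)) * (1 - X ^ (2 * n)))
    + (-((1 - X) ^ 2 * (1 - X ^ (4 * n - 1))) - (1 - X) ^ 2 * (1 - X ^ (6 * n)) + (1 - X) ^ 3)
        * (1 - X ^ 2) * ((1 - X ^ (2 * n - 2)) * (1 - X ^ (2 * n))))
    * (1 - X ^ (2 * n + 2))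

set_option maxHeartbeats 1000000 in
/-- The basic cleared-denominator identity. -/
lemma identityI (n : ℕ) (hn : 2 ≤ n) (s : Polynomial ℚ)
    (hs : algebraMap (Polynomial ℚ) (RatFunc ℚ) s = sFun n) :
    s * ((1 - X) ^ 3 * (1 - X ^ 2)) = Cpoly n := by
  apply RatFunc.algebraMap_injective ℚ
  have hne : ∀ i : ℕ, 0 < i → (1 : RatFunc ℚ) - RatFunc.X ^ i ≠ 0 := by
    intro i hi
    have : (1 : RatFunc ℚ) - RatFunc.X ^ i =
        algebraMap (Polynomial ℚ) (RatFunc ℚ) (1 - X ^ i) := by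
      simp [map_sub, map_pow, RatFunc.algebraMap_X]
    rw [this]
    apply RatFunc.algebraMap_ne_zero
    intro h
    apply Polynomial.X_pow_sub_C_ne_zero (R := ℚ) hi 1
    rw [map_one]
    linear_combination (-1 : Polynomial ℚ) * h
  have h1 : (1 : RatFunc ℚ) - RatFunc.X ≠ 0 := by simpa using hne 1 one_pos
  have h2 := hne 2 two_pos
  have h3 := hne 3 three_pos
  set T : RatFunc ℚ := RatFunc.X with hT
  have e1 : (1 - T) ^ 2 * (1 - T ^ (4 * n - 1)) * ((1 - T ^ 3) / (1 - T)) ^ 2 *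
      ((1 - T ^ (2 * n - 2)) / (1 - T) * ((1 - T ^ (2 * n)) / (1 - T ^ 2) *
        ((1 - T ^ (2 * n + 2)) / (1 - T ^ 3)))) * ((1 - T) ^ 3 * (1 - T ^ 2)) =
      algebraMap (Polynomial ℚ) (RatFunc ℚ)
        ((1 - X) ^ 2 * (1 - X ^ (4 * n - 1)) * (1 - X ^ 3) *
          ((1 - X ^ (2 * n - 2)) * ((1 - X ^ (2 * n)) * (1 - X ^ (2 * n + 2))))) := by
    simp only [map_mul, map_sub, map_pow, map_one, RatFunc.algebraMap_X, ← hT]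
    field_simp
  have e2 : (1 - T) ^ 2 * (1 - T ^ (4 * n - 1)) * ((1 - T ^ 2) / (1 - T)) *
      ((1 - T ^ (2 * n - 2)) / (1 - T)) *
      ((1 - T ^ (2 * n)) / (1 - T) * ((1 - T ^ (2 * n + 2)) / (1 - T ^ 2))) *
      ((1 - T) ^ 3 * (1 - T ^ 2)) =
      algebraMap (Polynomial ℚ) (RatFunc ℚ)
        ((1 - X) ^ 2 * (1 - X ^ (4 * n - 1)) * (1 - X ^ 2) *
          ((1 - X ^ (2 * n - 2)) * ((1 - X ^ (2 * n)) * (1 - X ^ (2 * n + 2))))) := by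
    simp only [map_mul, map_sub, map_pow, map_one, RatFunc.algebraMap_X, ← hT]
    field_simp
  have e3 : (1 - T) ^ 2 * (1 - T ^ (6 * n)) * ((1 - T ^ 2) / (1 - T)) *
      ((1 - T ^ (2 * n - 2)) / (1 - T)) *
      ((1 - T ^ (2 * n)) / (1 - T) * ((1 - T ^ (2 * n + 2)) / (1 - T ^ 2))) *
      ((1 - T) ^ 3 * (1 - T ^ 2)) =
      algebraMap (Polynomial ℚ) (RatFunc ℚ)
        ((1 - X) ^ 2 * (1 - X ^ (6 * n)) * (1 - X ^ 2) *
          ((1 - X ^ (2 * n - 2)) * ((1 - X ^ (2 * n)) * (1 - X ^ (2 * n + 2))))) := by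
    simp only [map_mul, map_sub, map_pow, map_one, RatFunc.algebraMap_X, ← hT]
    field_simp
  have e4 : (1 - T) ^ 3 * ((1 - T ^ 2) / (1 - T)) * ((1 - T ^ (2 * n - 2)) / (1 - T)) *
      ((1 - T ^ (2 * n)) / (1 - T) * ((1 - T ^ (2 * n + 2)) / (1 - T ^ 2))) *
      ((1 - T) ^ 3 * (1 - T ^ 2)) =
      algebraMap (Polynomial ℚ) (RatFunc ℚ)
        ((1 - X) ^ 3 * (1 - X ^ 2) *
          ((1 - X ^ (2 * n - 2)) * ((1 - X ^ (2 * n)) * (1 - X ^ (2 * n + 2))))) := by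
    simp only [map_mul, map_sub, map_pow, map_one, RatFunc.algebraMap_X, ← hT]
    field_simp
  have hC : algebraMap (Polynomial ℚ) (RatFunc ℚ) (Cpoly n) =
      algebraMap (Polynomial ℚ) (RatFunc ℚ)
        ((1 - X) ^ 2 * (1 - X ^ (4 * n - 1)) * (1 - X ^ 3) *
          ((1 - X ^ (2 * n - 2)) * ((1 - X ^ (2 * n)) * (1 - X ^ (2 * n + 2)))))
      - algebraMap (Polynomial ℚ) (RatFunc ℚ)
        ((1 - X) ^ 2 * (1 - X ^ (4 * n - 1)) * (1 - X ^ 2) *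
          ((1 - X ^ (2 * n - 2)) * ((1 - X ^ (2 * n)) * (1 - X ^ (2 * n + 2)))))
      - algebraMap (Polynomial ℚ) (RatFunc ℚ)
        ((1 - X) ^ 2 * (1 - X ^ (6 * n)) * (1 - X ^ 2) *
          ((1 - X ^ (2 * n - 2)) * ((1 - X ^ (2 * n)) * (1 - X ^ (2 * n + 2)))))
      + algebraMap (Polynomial ℚ) (RatFunc ℚ)
        ((1 - X) ^ 3 * (1 - X ^ 2) *
          ((1 - X ^ (2 * n - 2)) * ((1 - X ^ (2 * n)) * (1 - X ^ (2 * n + 2))))) := by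
    rw [← map_sub, ← map_sub, ← map_add]
    congr 1
    rw [Cpoly]
    ring
  rw [map_mul, hs, sFun]
  rw [show (Finset.Icc 1 3 : Finset ℕ) = {1, 2, 3} from rfl,
    show (Finset.Icc 1 2 : Finset ℕ) = {1, 2} from rfl]
  rw [Finset.prod_insert (by decide), Finset.prod_insert (by decide), Finset.prod_singleton,
    Finset.prod_insert (by decide), Finset.prod_singleton]
  simp only [map_mul, map_sub, map_pow, map_one, RatFunc.algebraMap_X, ← hT]
  rw [show 2*n+2*1-4 = 2*n-2 by omega, show 2*n+2*2-4 = 2*n by omega,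
    show 2*n+2*3-4 = 2*n+2 by omega, show 2*n-2+2*1 = 2*n by omega,
    show 2*n-2+2*2 = 2*n+2 by omega, pow_one]
  rw [hC]
  linear_combination e1 - e2 - e3 + e4

/-- The geometric sum polynomial. -/
noncomputable def Gp (k : ℕ) : Polynomial ℚ := ∑ j ∈ Finset.range k, X ^ j

lemma hGp (k : ℕ) : (1 - (X : Polynomial ℚ)) * Gp k = 1 - X ^ k := by
  have := geom_sum_mul (X : Polynomial ℚ) k
  rw [Gp]
  linear_combination -this

/-- `Cpoly` with the factor `(1-X)^7` extracted. -/
noncomputable def Wp (n : ℕ) : Polynomial ℚ :=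
  (Gp (4 * n - 1) * Gp 3 + (1 - Gp (4 * n - 1) - Gp (6 * n)) * Gp 2) *
    (Gp (2 * n - 2) * Gp (2 * n)) * Gp (2 * n + 2)

lemma hCW (n : ℕ) : Cpoly n = (1 - X) ^ 7 * Wp n := by
  rw [Cpoly, Wp, ← hGp (4 * n - 1), ← hGp (6 * n), ← hGp (2 * n - 2), ← hGp (2 * n + 2),
    ← hGp (2 * n), ← hGp 3, ← hGp 2]
  ring

set_option maxHeartbeats 1000000 in
/-- For `n ≥ 2` with `3 ∣ n+1`: `s` vanishes at every primitive third root of unity,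
is nonzero at every `(2n-1)`-th root of unity `α` with `α ≠ 1`, `α³ ≠ 1`, and
consequently `gcd(1 - t^{2n-1}, s) = 1 - t³` in `ℚ[t]` up to units. -/
theorem stmt_5 (n : ℕ) (hn : 2 ≤ n) (h3 : 3 ∣ n + 1) (s : Polynomial ℚ)
    (hs : algebraMap (Polynomial ℚ) (RatFunc ℚ) s = sFun n) :
    (∀ α : ℂ, IsPrimitiveRoot α 3 → Polynomial.aeval α s = 0) ∧
    (∀ α : ℂ, α ^ (2 * n - 1) = 1 → α ≠ 1 → α ^ 3 ≠ 1 → Polynomial.aeval α s ≠ 0) ∧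
    Associated (EuclideanDomain.gcd (1 - (X : Polynomial ℚ) ^ (2 * n - 1)) s)
      (1 - (X : Polynomial ℚ) ^ 3) := by
  have hI := identityI n hn s hs
  -- Part 1
  have part1 : ∀ α : ℂ, IsPrimitiveRoot α 3 → Polynomial.aeval α s = 0 := by
    intro α hα
    have hα3 : α ^ 3 = 1 := hα.pow_eq_one
    have h2n2 : α ^ (2 * n + 2) = 1 := by
      obtain ⟨m, hm⟩ : ∃ m, 2 * n + 2 = 3 * m := ⟨(2 * n + 2) / 3, by omega⟩
      rw [hm, pow_mul, hα3, one_pow]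
    have hev := congrArg (Polynomial.aeval α) hI
    simp only [Cpoly, map_mul, map_sub, map_add, map_neg, map_pow, map_one, aeval_X] at hev
    rw [h2n2, sub_self, mul_zero] at hev
    have hα1 : α ≠ 1 := hα.ne_one (by norm_num)
    have hα2 : α ^ 2 ≠ 1 := hα.pow_ne_one_of_pos_of_lt (by norm_num) (by norm_num)
    rcases mul_eq_zero.mp hev with h | h
    · exact h
    · exfalso
      rcases mul_eq_zero.mp h with h' | h'
      · exact sub_ne_zero.mpr (Ne.symm hα1) (pow_eq_zero_iff (by norm_num) |>.mp h')
      · exact sub_ne_zero.mpr (Ne.symm hα2) h'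
  -- Part 2
  have part2 : ∀ α : ℂ, α ^ (2 * n - 1) = 1 → α ≠ 1 → α ^ 3 ≠ 1 →
      Polynomial.aeval α s ≠ 0 := by
    intro α hα hα1 hα3 hzero
    set k := 2 * n - 2 with hk
    have hαk : α ^ (k + 1) = 1 := by rwa [show k + 1 = 2 * n - 1 by omega]
    have hα0 : α ≠ 0 := by
      intro h; rw [h, zero_pow (by omega)] at hαk; exact one_ne_zero hαk.symm
    have hinv : α ^ k = α⁻¹ := by
      have : α ^ k * α = 1 := by rw [← pow_succ]; exact hαk
      field_simp at this ⊢
      linear_combination this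
    have hev := congrArg (Polynomial.aeval α) hI
    simp only [Cpoly, map_mul, map_sub, map_add, map_neg, map_pow, map_one, aeval_X] at hev
    rw [hzero, zero_mul] at hev
    rw [show 2 * n - 2 = k from hk.symm, show 4 * n - 1 = 2 * k + 3 by omega,
      show 6 * n = 3 * k + 6 by omega,
      show 2 * n + 2 = k + 4 by omega, show 2 * n = k + 2 by omega] at hev
    rw [show α ^ (2 * k + 3) = α ^ k * α ^ k * α ^ 3 by ring,
      show α ^ (3 * k + 6) = α ^ k * α ^ k * α ^ k * α ^ 3 * α ^ 3 by ring,
      show α ^ (k + 2) = α ^ k * α ^ 2 by ring,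
      show α ^ (k + 4) = α ^ k * α ^ 2 * α ^ 2 by ring, hinv] at hev
    have h1 : (1 : ℂ) - α ≠ 0 := sub_ne_zero.mpr (Ne.symm hα1)
    have h3' : (1 : ℂ) - α ^ 3 ≠ 0 := sub_ne_zero.mpr (Ne.symm hα3)
    have key : (0 : ℂ) = (1 - α) ^ 5 * (1 - α ^ 3) ^ 2 := by
      rw [hev]
      have i1 : α⁻¹ * α⁻¹ * α ^ 3 = α := by field_simp
      have i2 : α⁻¹ * α⁻¹ * α⁻¹ * α ^ 3 * α ^ 3 = α ^ 3 := by field_simp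
      have i3 : α⁻¹ * α ^ 2 = α := by field_simp
      have himm : α * (1 - α⁻¹) = α - 1 := by field_simp
      rw [i1, i2, i3]
      linear_combination (-(1 - α) ^ 4 * (1 - α ^ 3) ^ 2) * himm
    exact (mul_ne_zero (pow_ne_zero _ h1) (pow_ne_zero _ h3')) key.symm
  refine ⟨part1, part2, ?_⟩
  -- `1 - X` is nonzero
  have hX1 : (1 : Polynomial ℚ) - X ≠ 0 := by
    intro h
    apply Polynomial.X_sub_C_ne_zero (1 : ℚ)
    rw [map_one]
    linear_combination (-1 : Polynomial ℚ) * h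
  -- the second cleared identity
  have hkey : s * (1 + X) = (1 - X) ^ 3 * Wp n := by
    apply mul_left_cancel₀ (pow_ne_zero 4 hX1)
    calc ((1 : Polynomial ℚ) - X) ^ 4 * (s * (1 + X))
        = (1 - X) ^ 4 * ((1 - X) ^ 3 * Wp n) := by
          linear_combination hI + hCW n
      _ = (1 - X) ^ 4 * ((1 - X) ^ 3 * Wp n) := rfl
  -- s(1) = 0
  have hs1 : Polynomial.eval 1 s = 0 := by
    have hev := congrArg (Polynomial.eval 1) hkey
    simp only [eval_mul, eval_add, eval_pow, eval_sub, eval_one, eval_X] at hev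
    norm_num at hev
    exact hev
  have hdvd1 : (X - 1 : Polynomial ℚ) ∣ s := by
    have := (Polynomial.dvd_iff_isRoot (p := s) (a := (1 : ℚ))).mpr hs1
    rwa [map_one] at this
  -- the cyclotomic polynomial divides s
  have hdvd2 : (X ^ 2 + X + 1 : Polynomial ℚ) ∣ s := by
    have hprim : IsPrimitiveRoot (Complex.exp (2 * Real.pi * Complex.I / 3)) 3 :=
      Complex.isPrimitiveRoot_exp 3 (by norm_num)
    have hzero := part1 _ hprim
    have hmp := minpoly.dvd ℚ _ hzero
    rw [← cyclotomic_eq_minpoly_rat hprim (by norm_num), cyclotomic_three] at hmp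
    exact hmp
  have hcop12 : IsCoprime (X - 1 : Polynomial ℚ) (X ^ 2 + X + 1) := by
    refine ⟨-(C (3⁻¹ : ℚ) * (X + 2)), C (3⁻¹ : ℚ), ?_⟩
    have h3' : (C (3⁻¹ : ℚ)) * 3 = 1 := by
      rw [show (3 : Polynomial ℚ) = C 3 from (map_ofNat (C : ℚ →+* Polynomial ℚ) 3).symm,
        ← C_mul]
      norm_num
    linear_combination h3'
  have hdvd3 : ((X : Polynomial ℚ) ^ 3 - 1) ∣ s := by
    have := hcop12.mul_dvd hdvd1 hdvd2
    rwa [show ((X : Polynomial ℚ) - 1) * (X ^ 2 + X + 1) = X ^ 3 - 1 by ring] at this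
  obtain ⟨u, hsu⟩ : ∃ u, s = (1 - X ^ 3) * u := by
    obtain ⟨v, hv⟩ := hdvd3
    exact ⟨-v, by rw [hv]; ring⟩
  -- the factorization of 1 - X^(2n-1)
  obtain ⟨m, hm⟩ : ∃ m, 2 * n - 1 = 3 * m := ⟨(2 * n - 1) / 3, by omega⟩
  set b : Polynomial ℚ := ∑ j ∈ Finset.range m, (X ^ 3) ^ j with hbdef
  have hab : (1 : Polynomial ℚ) - X ^ (2 * n - 1) = (1 - X ^ 3) * b := by
    have := geom_sum_mul ((X : Polynomial ℚ) ^ 3) m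
    rw [hm, pow_mul, hbdef]
    linear_combination this
  have ha0 : (1 : Polynomial ℚ) - X ^ (2 * n - 1) ≠ 0 := by
    intro h
    apply Polynomial.X_pow_sub_C_ne_zero (show 0 < 2 * n - 1 by omega) (1 : ℚ)
    rw [map_one]
    linear_combination (-1 : Polynomial ℚ) * h
  have hb0 : b ≠ 0 := by
    intro h
    rw [h, mul_zero] at hab
    exact ha0 hab
  -- squarefreeness
  have hsqf : Squarefree ((1 : Polynomial ℚ) - X ^ (2 * n - 1)) := by
    have hsep : ((X : Polynomial ℚ) ^ (2 * n - 1) - C 1).Separable :=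
      separable_X_pow_sub_C 1 (by
        simp only [ne_eq, Nat.cast_eq_zero]
        omega) one_ne_zero
    intro p hp
    apply hsep.squarefree p
    rw [map_one]
    have : (X : Polynomial ℚ) ^ (2 * n - 1) - 1 = -(1 - X ^ (2 * n - 1)) := by ring
    rw [this]
    exact hp.neg_right
  -- coprimality of b and u
  have hcopbu : IsCoprime b u := by
    by_contra hnc
    have hgne : EuclideanDomain.gcd b u ≠ 0 := by
      intro h
      exact hb0 ((EuclideanDomain.gcd_eq_zero_iff).mp h).1
    have hgnu : ¬IsUnit (EuclideanDomain.gcd b u) := fun h =>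
      hnc ((EuclideanDomain.gcd_isUnit_iff).mp h)
    obtain ⟨q, hqirr, hqdvd⟩ := WfDvdMonoid.exists_irreducible_factor hgnu hgne
    have hqb : q ∣ b := hqdvd.trans (EuclideanDomain.gcd_dvd_left b u)
    have hqu : q ∣ u := hqdvd.trans (EuclideanDomain.gcd_dvd_right b u)
    have hdeg : 0 < (q.map (algebraMap ℚ ℂ)).degree := by
      rw [Polynomial.degree_map]
      exact Polynomial.degree_pos_of_irreducible hqirr
    obtain ⟨α, hαroot⟩ := Complex.exists_root hdeg
    have hq0 : Polynomial.aeval α q = 0 := by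
      rwa [Polynomial.aeval_def, ← Polynomial.eval_map]
    have hbα : Polynomial.aeval α b = 0 := by
      obtain ⟨c, hc⟩ := hqb
      rw [hc, map_mul, hq0, zero_mul]
    have huα : Polynomial.aeval α u = 0 := by
      obtain ⟨c, hc⟩ := hqu
      rw [hc, map_mul, hq0, zero_mul]
    have haα : α ^ (2 * n - 1) = 1 := by
      have h0 := congrArg (Polynomial.aeval α) hab
      simp only [map_mul, map_sub, map_pow, map_one, aeval_X] at h0
      rw [hbα, mul_zero] at h0
      linear_combination -h0
    have hα3 : α ^ 3 ≠ 1 := by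
      intro hcube
      have hint : IsIntegral ℚ α :=
        ⟨X ^ (2 * n - 1) - C 1, monic_X_pow_sub_C 1 (by omega), by
          simp [haα]⟩
      have hp1 : minpoly ℚ α ∣ (1 - X ^ 3 : Polynomial ℚ) := by
        apply minpoly.dvd
        simp [hcube]
      have hp2 : minpoly ℚ α ∣ b := minpoly.dvd ℚ α hbα
      have hpp : minpoly ℚ α * minpoly ℚ α ∣ (1 : Polynomial ℚ) - X ^ (2 * n - 1) := by
        rw [hab]
        exact mul_dvd_mul hp1 hp2
      exact minpoly.not_isUnit ℚ α (hsqf _ hpp)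
    have hα1 : α ≠ 1 := by
      intro h
      apply hα3
      rw [h, one_pow]
    have hsα : Polynomial.aeval α s = 0 := by
      rw [hsu, map_mul, huα, mul_zero]
    exact part2 α haα hα1 hα3 hsα
  -- conclude
  have hd1 : ((1 : Polynomial ℚ) - X ^ 3) ∣
      EuclideanDomain.gcd ((1 : Polynomial ℚ) - X ^ (2 * n - 1)) s :=
    EuclideanDomain.dvd_gcd ⟨b, hab⟩ ⟨u, hsu⟩
  have hd2 : EuclideanDomain.gcd ((1 : Polynomial ℚ) - X ^ (2 * n - 1)) s ∣
      ((1 : Polynomial ℚ) - X ^ 3) := by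
    obtain ⟨x, y, hxy⟩ := hcopbu
    have hcomb : ((1 : Polynomial ℚ) - X ^ 3) =
        x * ((1 : Polynomial ℚ) - X ^ (2 * n - 1)) + y * s := by
      rw [hab, hsu]
      linear_combination (1 - (X : Polynomial ℚ) ^ 3) * hxy.symm
    rw [hcomb]
    exact dvd_add ((EuclideanDomain.gcd_dvd_left _ _).mul_left x)
      ((EuclideanDomain.gcd_dvd_right _ _).mul_left y)
  exact associated_of_dvd_dvd hd2 hd1
end

section
/- Let n ≥ 2 with 3 not dividing n+1 (equivalently 3 not dividing 2n-1). Then the GCD of 1 - t^{2n-1} and s(t) in ℚ[t] is 1 - t. -/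
open Polynomial

noncomputable def N1e (n : ℕ) : Polynomial ℚ :=
  X * X ^ (2 * n - 1) - X ^ 2 - X ^ 2 * (X ^ (2 * n - 1)) ^ 2 + X ^ 3 * X ^ (2 * n - 1) + X ^ 3 * (X ^ (2 * n - 1)) ^ 3 - X ^ 3 * (X ^ (2 * n - 1)) ^ 4 - (2 : Polynomial ℚ) * X ^ 4 * (X ^ (2 * n - 1)) ^ 2 + X ^ 4 * (X ^ (2 * n - 1)) ^ 3 - (2 : Polynomial ℚ) * X ^ 4 * (X ^ (2 * n - 1)) ^ 4 + X ^ 4 * (X ^ (2 * n - 1)) ^ 5 + X ^ 5 * X ^ (2 * n - 1) + (3 : Polynomial ℚ) * X ^ 5 * (X ^ (2 * n - 1)) ^ 3 - X ^ 5 * (X ^ (2 * n - 1)) ^ 4 + X ^ 5 * (X ^ (2 * n - 1)) ^ 5 - X ^ 6 * (X ^ (2 * n - 1)) ^ 2 - (2 : Polynomial ℚ) * X ^ 6 * (X ^ (2 * n - 1)) ^ 4 + X ^ 6 * (X ^ (2 * n - 1)) ^ 5 + X ^ 7 * (X ^ (2 * n - 1)) ^ 3 - X ^ 7 * (X ^ (2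 * n - 1)) ^ 4 + (2 : Polynomial ℚ) * X ^ 7 * (X ^ (2 * n - 1)) ^ 5 - X ^ 7 * (X ^ (2 * n - 1)) ^ 6 - (2 : Polynomial ℚ) * X ^ 8 * (X ^ (2 * n - 1)) ^ 4 + X ^ 8 * (X ^ (2 * n - 1)) ^ 5 - X ^ 8 * (X ^ (2 * n - 1)) ^ 6 + X ^ 9 * (X ^ (2 * n - 1)) ^ 5

set_option maxHeartbeats 2000000 in
lemma master (n : ℕ) (hn : 2 ≤ n) (s : Polynomial ℚ)
    (hs : algebraMap (Polynomial ℚ) (RatFunc ℚ) s = sFun n) :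
    X * (1 - X ^ 2) * s = N1e n := by
  have hinj : Function.Injective (algebraMap (Polynomial ℚ) (RatFunc ℚ)) :=
    IsFractionRing.injective _ _
  have hT : ∀ k : ℕ, 0 < k → (1 - RatFunc.X ^ k : RatFunc ℚ) ≠ 0 := by
    intro k hk h
    have h0 : (algebraMap (Polynomial ℚ) (RatFunc ℚ)) (1 - X ^ k) = 0 := by
      simpa [map_sub, map_pow, RatFunc.algebraMap_X] using h
    have h2 : (1 - X ^ k : Polynomial ℚ) = 0 := (map_eq_zero_iff _ hinj).mp h0
    have h3 := congrArg (Polynomial.eval 0) h2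
    simp [zero_pow hk.ne'] at h3
  obtain ⟨p, rfl⟩ : ∃ p, n = p + 2 := ⟨n - 2, by omega⟩
  apply hinj
  simp only [map_mul, map_sub, map_add, map_pow, map_one, hs, RatFunc.algebraMap_X, N1e,
    map_ofNat]
  rw [sFun]
  rw [show (Finset.Icc 1 3 : Finset ℕ) = {1,2,3} from rfl,
      show (Finset.Icc 1 2 : Finset ℕ) = {1,2} from rfl]
  rw [show ({1,2,3} : Finset ℕ) = insert 1 (insert 2 {3}) from rfl,
      show ({1,2} : Finset ℕ) = insert 1 {2} from rfl]
  rw [Finset.prod_insert (by decide), Finset.prod_insert (by decide),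
      Finset.prod_singleton, Finset.prod_insert (by decide), Finset.prod_singleton]
  simp only [show 4 * (p + 2) - 1 = p * 4 + 7 from by omega,
    show 2 * (p + 2) + 2 * 1 - 4 = p * 2 + 2 from by omega,
    show 2 * (p + 2) + 2 * 2 - 4 = p * 2 + 4 from by omega,
    show 2 * (p + 2) + 2 * 3 - 4 = p * 2 + 6 from by omega,
    show 2 * (p + 2) - 2 = p * 2 + 2 from by omega,
    show 2 * (p + 2) - 2 + 2 * 1 = p * 2 + 4 from by omega,
    show 2 * (p + 2) - 2 + 2 * 2 = p * 2 + 6 from by omega,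
    show 6 * (p + 2) = p * 6 + 12 from by omega,
    show 2 * (p + 2) - 1 = p * 2 + 3 from by omega,
    pow_add, pow_mul, pow_one]
  have h1 := hT 1 one_pos
  have h2 := hT 2 two_pos
  have h3 := hT 3 three_pos
  rw [pow_one] at h1
  have q1 : ((1 - RatFunc.X ^ 3) / (1 - RatFunc.X) : RatFunc ℚ) = 1 + RatFunc.X + RatFunc.X ^ 2 := by
    rw [div_eq_iff h1]; ring
  have q2 : ((1 - RatFunc.X ^ 2) / (1 - RatFunc.X) : RatFunc ℚ) = 1 + RatFunc.X := by
    rw [div_eq_iff h1]; ring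
  rw [q1, q2]
  generalize (RatFunc.X : RatFunc ℚ) ^ p = V
  have hD5 : ((1 - RatFunc.X) ^ 2 * (1 - RatFunc.X ^ 2) * (1 - RatFunc.X ^ 3) : RatFunc ℚ) ≠ 0 :=
    mul_ne_zero (mul_ne_zero (pow_ne_zero 2 h1) h2) h3
  have hA : ((1 - RatFunc.X) ^ 2 * (1 - V ^ 4 * RatFunc.X ^ 7) * (1 + RatFunc.X + RatFunc.X ^ 2) ^ 2 * ((1 - V ^ 2 * RatFunc.X ^ 2) / (1 - RatFunc.X) * ((1 - V ^ 2 * RatFunc.X ^ 4) / (1 - RatFunc.X ^ 2) * ((1 - V ^ 2 * RatFunc.X ^ 6) / (1 - RatFunc.X ^ 3)))) : RatFunc ℚ) * ((1 - RatFunc.X) ^ 2 * (1 - RatFunc.X ^ 2) * (1 - RatFunc.X ^ 3)) = (1 - RatFunc.X) ^ 3 * (1 - RatFunc.X ^ 2) ^ 0 * (1 - V ^ 4 * RatFunc.X ^ 7) * (1 + RatFunc.X + RatFunc.X ^ 2) ^ 2 * (1 - V ^ 2 * RatFunc.X ^ 2) * (1 - V ^ 2 * RatFunc.X ^ 4) *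 (1 - V ^ 2 * RatFunc.X ^ 6) := by
    field_simp
  have hB : ((1 - RatFunc.X) ^ 2 * (1 - V ^ 4 * RatFunc.X ^ 7) * (1 + RatFunc.X) * ((1 - V ^ 2 * RatFunc.X ^ 2) / (1 - RatFunc.X)) * ((1 - V ^ 2 * RatFunc.X ^ 2 * RatFunc.X ^ 2) / (1 - RatFunc.X) * ((1 - V ^ 2 * RatFunc.X ^ 2 * (RatFunc.X ^ 2) ^ 2) / (1 - RatFunc.X ^ 2))) : RatFunc ℚ) * ((1 - RatFunc.X) ^ 2 * (1 - RatFunc.X ^ 2) * (1 - RatFunc.X ^ 3)) = (1 - RatFunc.X) ^ 2 * (1 - V ^ 4 * RatFunc.X ^ 7) * (1 + RatFunc.X) * (1 - V ^ 2 * RatFunc.X ^ 2) * (1 - V ^ 2 * RatFunc.X ^ 2 * RatFunc.X ^ 2) * (1 - V ^ 2 * RatFunc.X ^ 2 * (RatFunc.X ^ 2) ^ 2) * (1 - RatFunc.X ^ 3) := by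
    field_simp
  have hC : ((1 - RatFunc.X) ^ 2 * (1 - V ^ 6 * RatFunc.X ^ 12) * (1 + RatFunc.X) * ((1 - V ^ 2 * RatFunc.X ^ 2) / (1 - RatFunc.X)) * ((1 - V ^ 2 * RatFunc.X ^ 2 * RatFunc.X ^ 2) / (1 - RatFunc.X) * ((1 - V ^ 2 * RatFunc.X ^ 2 * (RatFunc.X ^ 2) ^ 2) / (1 - RatFunc.X ^ 2))) : RatFunc ℚ) * ((1 - RatFunc.X) ^ 2 * (1 - RatFunc.X ^ 2) * (1 - RatFunc.X ^ 3)) = (1 - RatFunc.X) ^ 2 * (1 - V ^ 6 * RatFunc.X ^ 12) * (1 + RatFunc.X) * (1 - V ^ 2 * RatFunc.X ^ 2) * (1 - V ^ 2 * RatFunc.X ^ 2 * RatFunc.X ^ 2) * (1 - V ^ 2 * RatFunc.X ^ 2 * (RatFunc.X ^ 2) ^ 2) * (1 - RatFunc.X ^ 3) := by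
    field_simp
  have hD : ((1 - RatFunc.X) ^ 3 * (1 + RatFunc.X) * ((1 - V ^ 2 * RatFunc.X ^ 2) / (1 - RatFunc.X)) * ((1 - V ^ 2 * RatFunc.X ^ 2 * RatFunc.X ^ 2) / (1 - RatFunc.X) * ((1 - V ^ 2 * RatFunc.X ^ 2 * (RatFunc.X ^ 2) ^ 2) / (1 - RatFunc.X ^ 2))) : RatFunc ℚ) * ((1 - RatFunc.X) ^ 2 * (1 - RatFunc.X ^ 2) * (1 - RatFunc.X ^ 3)) = (1 - RatFunc.X) ^ 3 * (1 + RatFunc.X) * (1 - V ^ 2 * RatFunc.X ^ 2) * (1 - V ^ 2 * RatFunc.X ^ 2 * RatFunc.X ^ 2) * (1 - V ^ 2 * RatFunc.X ^ 2 * (RatFunc.X ^ 2) ^ 2) * (1 - RatFunc.X ^ 3) := by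
    field_simp
  apply mul_right_cancel₀ hD5
  rw [show RatFunc.X * (1 - RatFunc.X ^ 2) * (((1 - RatFunc.X) ^ 2 * (1 - V ^ 4 * RatFunc.X ^ 7) * (1 + RatFunc.X + RatFunc.X ^ 2) ^ 2 * ((1 - V ^ 2 * RatFunc.X ^ 2) / (1 - RatFunc.X) * ((1 - V ^ 2 * RatFunc.X ^ 4) / (1 - RatFunc.X ^ 2) * ((1 - V ^ 2 * RatFunc.X ^ 6) / (1 - RatFunc.X ^ 3))))) - ((1 - RatFunc.X) ^ 2 * (1 - V ^ 4 * RatFunc.X ^ 7) * (1 + RatFunc.X) * ((1 - V ^ 2 * RatFunc.X ^ 2) / (1 - RatFunc.X)) * ((1 - V ^ 2 * RatFunc.X ^ 2 * RatFunc.X ^ 2) / (1 - RatFunc.X) * ((1 - V ^ 2 * RatFunc.X ^ 2 * (RatFunc.X ^ 2) ^ 2) / (1 - RatFunc.X ^ 2)))) - ((1 - RatFunc.X) ^ 2 * (1 - V ^ 6 * RatFunc.X ^ 12) * (1 + RatFunc.X) * ((1 - V ^ 2 * RatFunc.X ^ 2) / (1 - RatFunc.X)) * ((1 - V ^ 2 *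 RatFunc.X ^ 2 * RatFunc.X ^ 2) / (1 - RatFunc.X) * ((1 - V ^ 2 * RatFunc.X ^ 2 * (RatFunc.X ^ 2) ^ 2) / (1 - RatFunc.X ^ 2)))) + ((1 - RatFunc.X) ^ 3 * (1 + RatFunc.X) * ((1 - V ^ 2 * RatFunc.X ^ 2) / (1 - RatFunc.X)) * ((1 - V ^ 2 * RatFunc.X ^ 2 * RatFunc.X ^ 2) / (1 - RatFunc.X) * ((1 - V ^ 2 * RatFunc.X ^ 2 * (RatFunc.X ^ 2) ^ 2) / (1 - RatFunc.X ^ 2))))) * ((1 - RatFunc.X) ^ 2 * (1 - RatFunc.X ^ 2) * (1 - RatFunc.X ^ 3))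
      = RatFunc.X * (1 - RatFunc.X ^ 2) * ((((1 - RatFunc.X) ^ 2 * (1 - V ^ 4 * RatFunc.X ^ 7) * (1 + RatFunc.X + RatFunc.X ^ 2) ^ 2 * ((1 - V ^ 2 * RatFunc.X ^ 2) / (1 - RatFunc.X) * ((1 - V ^ 2 * RatFunc.X ^ 4) / (1 - RatFunc.X ^ 2) * ((1 - V ^ 2 * RatFunc.X ^ 6) / (1 - RatFunc.X ^ 3))))) * ((1 - RatFunc.X) ^ 2 * (1 - RatFunc.X ^ 2) * (1 - RatFunc.X ^ 3))) - (((1 - RatFunc.X) ^ 2 * (1 - V ^ 4 * RatFunc.X ^ 7) * (1 + RatFunc.X) * ((1 - V ^ 2 * RatFunc.X ^ 2) / (1 - RatFunc.X)) * ((1 - V ^ 2 * RatFunc.X ^ 2 * RatFunc.X ^ 2) / (1 - RatFunc.X) * ((1 - V ^ 2 * RatFunc.X ^ 2 * (RatFunc.X ^ 2) ^ 2) / (1 - RatFunc.X ^ 2)))) * ((1 - RatFunc.X) ^ 2 * (1 - RatFunc.X ^ 2) * (1 - RatFunc.X ^ 3))) - (((1 - RatFunc.X) ^ 2 * (1 -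 V ^ 6 * RatFunc.X ^ 12) * (1 + RatFunc.X) * ((1 - V ^ 2 * RatFunc.X ^ 2) / (1 - RatFunc.X)) * ((1 - V ^ 2 * RatFunc.X ^ 2 * RatFunc.X ^ 2) / (1 - RatFunc.X) * ((1 - V ^ 2 * RatFunc.X ^ 2 * (RatFunc.X ^ 2) ^ 2) / (1 - RatFunc.X ^ 2)))) * ((1 - RatFunc.X) ^ 2 * (1 - RatFunc.X ^ 2) * (1 - RatFunc.X ^ 3))) + (((1 - RatFunc.X) ^ 3 * (1 + RatFunc.X) * ((1 - V ^ 2 * RatFunc.X ^ 2) / (1 - RatFunc.X)) * ((1 - V ^ 2 * RatFunc.X ^ 2 * RatFunc.X ^ 2) / (1 - RatFunc.X) * ((1 - V ^ 2 * RatFunc.X ^ 2 * (RatFunc.X ^ 2) ^ 2) / (1 - RatFunc.X ^ 2)))) * ((1 - RatFunc.X) ^ 2 * (1 - RatFunc.X ^ 2) * (1 - RatFunc.X ^ 3)))) from by ring]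
  rw [hA, hB, hC, hD]
  ring

noncomputable def R1e (n : ℕ) : Polynomial ℚ :=
  X - X ^ 2 - X ^ 2 * X ^ (2 * n - 1) + X ^ 3 - X ^ 3 * (X ^ (2 * n - 1)) ^ 3 - (2 : Polynomial ℚ) * X ^ 4 - (2 : Polynomial ℚ) * X ^ 4 * X ^ (2 * n - 1) - X ^ 4 * (X ^ (2 * n - 1)) ^ 3 + X ^ 4 * (X ^ (2 * n - 1)) ^ 4 + (4 : Polynomial ℚ) * X ^ 5 + (3 : Polynomial ℚ) * X ^ 5 * X ^ (2 * n - 1) + (3 : Polynomial ℚ) * X ^ 5 * (X ^ (2 * n - 1)) ^ 2 + X ^ 5 * (X ^ (2 * n - 1)) ^ 4 - (2 : Polynomial ℚ) * X ^ 6 - (2 : Polynomial ℚ) * X ^ 6 * X ^ (2 * n - 1) - X ^ 6 * (X ^ (2 * n - 1)) ^ 2 - X ^ 6 * (X ^ (2 * n - 1)) ^ 3 + X ^ 6 * (X ^ (2 * n - 1)) ^ 4 + X ^ 7 + X ^ 7 * X ^ (2 * n - 1) + X ^ 7 * (X ^ (2 * n - 1)) ^ 2 + X ^ 7 * (X ^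 (2 * n - 1)) ^ 4 - X ^ 7 * (X ^ (2 * n - 1)) ^ 5 - (2 : Polynomial ℚ) * X ^ 8 - (2 : Polynomial ℚ) * X ^ 8 * X ^ (2 * n - 1) - (2 : Polynomial ℚ) * X ^ 8 * (X ^ (2 * n - 1)) ^ 2 - (2 : Polynomial ℚ) * X ^ 8 * (X ^ (2 * n - 1)) ^ 3 - X ^ 8 * (X ^ (2 * n - 1)) ^ 5 + X ^ 9 + X ^ 9 * X ^ (2 * n - 1) + X ^ 9 * (X ^ (2 * n - 1)) ^ 2 + X ^ 9 * (X ^ (2 * n - 1)) ^ 3 + X ^ 9 * (X ^ (2 * n - 1)) ^ 4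

lemma coprime_one_sub_X {p : Polynomial ℚ} (h : p.eval 1 ≠ 0) :
    IsCoprime (1 - X : Polynomial ℚ) p := by
  obtain ⟨q, hq⟩ := Polynomial.X_sub_C_dvd_sub_C_eval (a := (1:ℚ)) (p := p)
  refine ⟨C (p.eval 1)⁻¹ * q, C (p.eval 1)⁻¹, ?_⟩
  have h1 : (C (p.eval 1)⁻¹ : Polynomial ℚ) * C (p.eval 1) = 1 := by
    rw [← C_mul, inv_mul_cancel₀ h, C_1]
  calc C (p.eval 1)⁻¹ * q * (1 - X) + C (p.eval 1)⁻¹ * p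
      = C (p.eval 1)⁻¹ * (p - (X - C 1) * q) := by rw [C_1]; ring
    _ = C (p.eval 1)⁻¹ * C (p.eval 1) := by rw [← hq]; ring_nf
    _ = 1 := h1

lemma decomp (n : ℕ) :
    N1e n = X * (1 - X) ^ 2 * (1 - X ^ 3) ^ 2 + (X ^ (2 * n - 1) - 1) * R1e n := by
  unfold N1e R1e
  generalize (X : Polynomial ℚ) ^ (2 * n - 1) = Y
  ring

lemma evalR1 (n : ℕ) : (R1e n).eval 1 = 0 := by
  simp [R1e]
  norm_num

/-- For `n ≥ 2` with `3 ∤ n+1`, the GCD of `1 - t^{2n-1}` and `s(t)` in `ℚ[t]` is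
`1 - t` up to units. -/
theorem stmt_6 (n : ℕ) (hn : 2 ≤ n) (h3 : ¬ (3 ∣ n + 1)) (s : Polynomial ℚ)
    (hs : algebraMap (Polynomial ℚ) (RatFunc ℚ) s = sFun n) :
    Associated (EuclideanDomain.gcd (1 - (X : Polynomial ℚ) ^ (2 * n - 1)) s)
      (1 - (X : Polynomial ℚ)) := by
  have hM := master n hn s hs
  have key := decomp n
  have h1X0 : (1 - X : Polynomial ℚ) ≠ 0 := by
    intro h
    have := congrArg (Polynomial.eval 0) h
    simp at this
  set g := EuclideanDomain.gcd (1 - (X : Polynomial ℚ) ^ (2 * n - 1)) s with hgdef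
  have hg1 : g ∣ 1 - (X : Polynomial ℚ) ^ (2 * n - 1) := EuclideanDomain.gcd_dvd_left _ _
  have hg2 : g ∣ s := EuclideanDomain.gcd_dvd_right _ _
  -- (1 - X) divides s
  obtain ⟨r₁, hr₁⟩ : (1 - X : Polynomial ℚ) ∣ R1e n := by
    rw [show (1 - X : Polynomial ℚ) = -(X - C 1) by rw [C_1]; ring]
    exact (neg_dvd).mpr (Polynomial.dvd_iff_isRoot.mpr (evalR1 n))
  obtain ⟨u, hu⟩ : (1 - X : Polynomial ℚ) ∣ (X ^ (2 * n - 1) - 1) := by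
    rw [show ((X : Polynomial ℚ) ^ (2 * n - 1) - 1) = -(1 - X ^ (2 * n - 1)) by ring]
    exact (dvd_neg).mpr (one_sub_dvd_one_sub_pow _ _)
  have hcancel : X * (1 + X) * s = (1 - X) * (X * (1 - X ^ 3) ^ 2 + u * r₁) := by
    apply mul_left_cancel₀ h1X0
    linear_combination hM + key + (R1e n) * hu + ((1 - X) * u) * hr₁
  have hs1 : (1 - X : Polynomial ℚ) ∣ s := by
    have hco : IsCoprime (1 - X : Polynomial ℚ) ((X : Polynomial ℚ) * (1 + X)) :=
      coprime_one_sub_X (by norm_num)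
    exact hco.dvd_of_dvd_mul_left (Dvd.intro _ hcancel.symm)
  have hdvdg : (1 - X : Polynomial ℚ) ∣ g :=
    EuclideanDomain.dvd_gcd (one_sub_dvd_one_sub_pow _ _) hs1
  -- g divides (1 - X)
  have hgN : g ∣ N1e n := hM ▸ hg2.mul_left (X * (1 - X ^ 2))
  have hgR : g ∣ ((X : Polynomial ℚ) ^ (2 * n - 1) - 1) * R1e n := by
    refine Dvd.dvd.mul_right ?_ _
    rw [show ((X : Polynomial ℚ) ^ (2 * n - 1) - 1) = -(1 - X ^ (2 * n - 1)) by ring]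
    exact (dvd_neg).mpr hg1
  have hgP : g ∣ X * (1 - X) ^ 2 * (1 - X ^ 3) ^ 2 := by
    have he : N1e n - (X ^ (2 * n - 1) - 1) * R1e n = X * (1 - X) ^ 2 * (1 - X ^ 3) ^ 2 := by
      linear_combination key
    exact he ▸ dvd_sub hgN hgR
  have hcoX : IsCoprime g (X : Polynomial ℚ) := by
    refine IsCoprime.of_isCoprime_of_dvd_left ?_ hg1
    refine ⟨1, X ^ (2 * n - 2), ?_⟩
    rw [one_mul, ← pow_succ, show 2 * n - 2 + 1 = 2 * n - 1 by omega]
    ring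
  have h6 : g ∣ (1 - X : Polynomial ℚ) ^ 2 * (1 - X ^ 3) ^ 2 := by
    refine hcoX.dvd_of_dvd_mul_left ?_
    rw [show (X : Polynomial ℚ) * ((1 - X) ^ 2 * (1 - X ^ 3) ^ 2)
        = X * (1 - X) ^ 2 * (1 - X ^ 3) ^ 2 by ring]
    exact hgP
  have h7 : g ∣ (1 - X : Polynomial ℚ) ^ 4 * (1 + X + X ^ 2) ^ 2 := by
    rw [show (1 - X : Polynomial ℚ) ^ 4 * (1 + X + X ^ 2) ^ 2
        = (1 - X) ^ 2 * (1 - X ^ 3) ^ 2 by ring]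
    exact h6
  have hcop3 : IsCoprime (1 - (X : Polynomial ℚ) ^ (2 * n - 1)) (1 + X + X ^ 2) := by
    obtain ⟨a, b, hab, ha12⟩ : ∃ a b, 2 * n - 1 = a + 3 * b ∧ (a = 1 ∨ a = 2) :=
      ⟨(2 * n - 1) % 3, (2 * n - 1) / 3, by omega, by omega⟩
    obtain ⟨w, hw⟩ : (1 + X + X ^ 2 : Polynomial ℚ) ∣ (1 - (X ^ 3) ^ b) :=
      dvd_trans ⟨1 - X, by ring⟩ (one_sub_dvd_one_sub_pow _ _)
    have base : IsCoprime (1 - (X : Polynomial ℚ) ^ a) (1 + X + X ^ 2) := by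
      rcases ha12 with h | h <;> rw [h]
      · rw [pow_one]
        exact coprime_one_sub_X (by norm_num)
      · rw [show (1 - X ^ 2 : Polynomial ℚ) = (1 - X) * (1 + X) by ring]
        exact IsCoprime.mul_left (coprime_one_sub_X (by norm_num)) ⟨-X, 1, by ring⟩
    rw [hab, pow_add, pow_mul]
    have hsplit : (1 - (X : Polynomial ℚ) ^ a * (X ^ 3) ^ b)
        = (1 - X ^ a) + (1 + X + X ^ 2) * (X ^ a * w) := by
      linear_combination ((X : Polynomial ℚ) ^ a) * hw
    rw [hsplit]
    exact base.add_mul_left_left _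
  have hcog3 : IsCoprime g ((1 + X + X ^ 2 : Polynomial ℚ) ^ 2) :=
    (hcop3.of_isCoprime_of_dvd_left hg1).pow_right
  have h8 : g ∣ (1 - X : Polynomial ℚ) ^ 4 := hcog3.dvd_of_dvd_mul_right h7
  have hgeom : (1 - (X : Polynomial ℚ) ^ (2 * n - 1))
      = (1 - X) * (∑ i ∈ Finset.range (2 * n - 1), X ^ i) := by
    linear_combination geom_sum_mul (X : Polynomial ℚ) (2 * n - 1)
  have hSco : IsCoprime (1 - X : Polynomial ℚ) (∑ i ∈ Finset.range (2 * n - 1), X ^ i) := by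
    apply coprime_one_sub_X
    rw [Polynomial.eval_finset_sum]
    simp only [Polynomial.eval_pow, Polynomial.eval_X, one_pow]
    rw [Finset.sum_const, Finset.card_range, nsmul_eq_mul, mul_one]
    have : 2 * n - 1 ≠ 0 := by omega
    exact_mod_cast Nat.cast_ne_zero.mpr this
  have hcoS : IsCoprime g (∑ i ∈ Finset.range (2 * n - 1), X ^ i) :=
    (hSco.pow_left (m := 4)).of_isCoprime_of_dvd_left h8
  have h9 : g ∣ (1 - X : Polynomial ℚ) := by
    refine hcoS.dvd_of_dvd_mul_right ?_
    rw [← hgeom]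
    exact hg1
  exact associated_of_dvd_dvd h9 hdvdg
end

section
/- Let P(z) = ∑_{i=0}^{4n} a_i z^i be a polynomial of degree 4n over ℤ satisfying the palindromic (Poincaré duality) condition a_i = a_{4n-i} for all i. If the polynomial (1 - z^{2(2n-1)})/(1 - z²) = 1 + z² + ⋯ + z^{2(2n-2)} divides P(z), then 2a_1 = a_3. -/
open Polynomial Finset

lemma Dcoeff (n : ℕ) (hn : 2 ≤ n) (m : ℕ) :
    (∑ i ∈ Finset.range (2 * n - 1), (X : Polynomial ℤ) ^ (2 * i)).coeff m
      = if m % 2 = 0 ∧ m ≤ 4 * n - 4 then 1 else 0 := by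
  rw [finset_sum_coeff]
  simp only [coeff_X_pow]
  rcases Nat.even_or_odd m with ⟨k, hk⟩ | ⟨k, hk⟩
  · have trans : ∀ i ∈ Finset.range (2 * n - 1),
        (if m = 2 * i then (1:ℤ) else 0) = if i = k then 1 else 0 := by
      intro i _
      by_cases h : i = k
      · subst h; rw [if_pos (by omega), if_pos rfl]
      · rw [if_neg (by omega), if_neg h]
    rw [Finset.sum_congr rfl trans, Finset.sum_ite_eq' (Finset.range (2 * n - 1))]
    by_cases h : k ∈ Finset.range (2 * n - 1)
    · simp only [Finset.mem_range] at h
      rw [if_pos (by simpa using h), if_pos (by omega)]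
    · simp only [Finset.mem_range, not_lt] at h
      rw [if_neg (by simpa using h), if_neg (by omega)]
  · rw [Finset.sum_eq_zero, if_neg]
    · omega
    · intro b _; rw [if_neg]; omega

/-- A palindromic integer polynomial `P(z) = ∑_{i=0}^{4n} a_i z^i` of degree `4n`
divisible by `1 + z² + ⋯ + z^{2(2n-2)}` satisfies `2·a₁ = a₃`. -/
theorem stmt_7 (n : ℕ) (hn : 2 ≤ n) (a : ℕ → ℤ)
    (hdeg : a (4 * n) ≠ 0)
    (hpal : ∀ i ≤ 4 * n, a i = a (4 * n - i))
    (hdvd : (∑ i ∈ Finset.range (2 * n - 1), (X : Polynomial ℤ) ^ (2 * i)) ∣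
      ∑ i ∈ Finset.range (4 * n + 1), Polynomial.C (a i) * X ^ i) :
    2 * a 1 = a 3 := by
  set D : Polynomial ℤ := ∑ i ∈ Finset.range (2 * n - 1), (X : Polynomial ℤ) ^ (2 * i) with hD
  set P : Polynomial ℤ := ∑ i ∈ Finset.range (4 * n + 1), Polynomial.C (a i) * X ^ i with hP
  have hPcoeff : ∀ k ≤ 4 * n, P.coeff k = a k := by
    intro k hk
    rw [hP, finset_sum_coeff]
    simp only [coeff_C_mul, coeff_X_pow, mul_ite, mul_one, mul_zero]
    rw [Finset.sum_eq_single k]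
    · simp
    · intro b _ hb; rw [if_neg (by omega)]
    · intro h; simp at h; omega
  obtain ⟨Q, hQ⟩ := hdvd
  have hDm : ∀ m, D.coeff m = if m % 2 = 0 ∧ m ≤ 4 * n - 4 then 1 else 0 :=
    Dcoeff n hn
  have hDdeg : D.natDegree = 4 * n - 4 := by
    apply le_antisymm
    · rw [Polynomial.natDegree_le_iff_coeff_eq_zero]
      intro m hm; rw [hDm m, if_neg (by omega)]
    · apply le_natDegree_of_ne_zero
      rw [hDm, if_pos (by omega)]; norm_num
  have hPdeg : P.natDegree ≤ 4 * n := by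
    apply Polynomial.natDegree_sum_le_of_forall_le
    intro i hi
    calc (C (a i) * X ^ i).natDegree ≤ i := natDegree_C_mul_X_pow_le _ _
    _ ≤ 4 * n := by simp at hi; omega
  have hDne : D ≠ 0 := by
    intro h
    have := hDm 0
    rw [h] at this; simp at this
  have hQne : Q ≠ 0 := by
    intro h
    apply hdeg
    rw [← hPcoeff (4 * n) le_rfl, hQ, h]
    simp
  have hQdeg : Q.natDegree ≤ 4 := by
    have := Polynomial.natDegree_mul hDne hQne
    rw [← hQ] at this
    omega
  have h1 : a 1 = Q.coeff 1 := by
    rw [← hPcoeff 1 (by omega), hQ, coeff_mul,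
      Finset.Nat.sum_antidiagonal_eq_sum_range_succ_mk]
    rw [Finset.sum_range_succ, Finset.sum_range_succ, Finset.sum_range_zero]
    rw [hDm, hDm]
    rw [if_pos (by omega), if_neg (by omega)]
    ring
  have h3 : a 3 = Q.coeff 3 + Q.coeff 1 := by
    rw [← hPcoeff 3 (by omega), hQ, coeff_mul,
      Finset.Nat.sum_antidiagonal_eq_sum_range_succ_mk]
    rw [Finset.sum_range_succ, Finset.sum_range_succ, Finset.sum_range_succ,
      Finset.sum_range_succ, Finset.sum_range_zero]
    rw [hDm, hDm, hDm, hDm]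
    rw [if_pos (by omega), if_neg (by omega), if_pos (by omega), if_neg (by omega)]
    ring
  have h4 : a (4 * n - 1) = Q.coeff 3 := by
    rw [← hPcoeff (4 * n - 1) (by omega), hQ, coeff_mul]
    rw [Finset.sum_eq_single (4 * n - 4, 3)]
    · dsimp only
      rw [hDm, if_pos (by omega), one_mul]
    · rintro ⟨i, j⟩ hij hne
      simp only [HasAntidiagonal.mem_antidiagonal] at hij
      simp only [ne_eq, Prod.mk.injEq, not_and] at hne
      dsimp only
      by_cases hj : 4 < j
      · have hz : Q.coeff j = 0 := Polynomial.coeff_eq_zero_of_natDegree_lt (by omega)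
        rw [hz, mul_zero]
      · rw [hDm, if_neg (by omega), zero_mul]
    · intro h
      simp only [HasAntidiagonal.mem_antidiagonal] at h
      omega
  have hpal1 := hpal 1 (by omega)
  omega
end

section
/- Let n ≥ 3 with 3 dividing n+1, and let P(z) = ∑_{i=0}^{4n} a_i z^i be a palindromic integer polynomial (a_i = a_{4n-i}). If (1 - z^{2(2n-1)})/(1 - z^6) divides P(z), then 2a_1 = a_7. -/
open Polynomial Finset

/-- For `n ≥ 3` with `3 ∣ n+1`, a palindromic integer polynomial of degree `4n`
divisible by `(1 - z^{2(2n-1)})/(1 - z⁶) = ∑_{i=0}^{(2n-4)/3} z^{6i}`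
satisfies `2·a₁ = a₇`. -/
theorem stmt_8 (n : ℕ) (hn : 3 ≤ n) (h3 : 3 ∣ n + 1) (a : ℕ → ℤ)
    (hdeg : a (4 * n) ≠ 0)
    (hpal : ∀ i ≤ 4 * n, a i = a (4 * n - i))
    (hdvd : (∑ i ∈ Finset.range ((2 * n - 1) / 3), (X : Polynomial ℤ) ^ (6 * i)) ∣
      ∑ i ∈ Finset.range (4 * n + 1), Polynomial.C (a i) * X ^ i) :
    2 * a 1 = a 7 := by
  obtain ⟨t, ht⟩ := h3
  set m := (2 * n - 1) / 3 with hmdef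
  have hm : 3 * m = 2 * n - 1 := by omega
  have hm3 : 3 ≤ m := by omega
  set D : Polynomial ℤ := ∑ i ∈ Finset.range m, (X : Polynomial ℤ) ^ (6 * i) with hD
  set P : Polynomial ℤ := ∑ i ∈ Finset.range (4 * n + 1), Polynomial.C (a i) * X ^ i with hP
  obtain ⟨Q, hQ⟩ := hdvd
  have hPcoeff : ∀ k, k ≤ 4 * n → P.coeff k = a k := by
    intro k hk
    rw [hP, Polynomial.finset_sum_coeff]
    simp only [Polynomial.coeff_C_mul, Polynomial.coeff_X_pow]
    rw [Finset.sum_eq_single k]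
    · simp
    · intro b _ hb; simp [hb]; exact fun h => absurd h.symm hb
    · intro h; exact absurd (Finset.mem_range.mpr (by omega)) h
  have hPcoeff0 : ∀ k, 4 * n < k → P.coeff k = 0 := by
    intro k hk
    rw [hP, Polynomial.finset_sum_coeff]
    apply Finset.sum_eq_zero
    intro b hb
    have hbk : b ≠ k := by simp only [Finset.mem_range] at hb; omega
    simp [Polynomial.coeff_C_mul, Polynomial.coeff_X_pow, hbk]
    exact fun h => absurd h.symm hbk
  have hPne : P ≠ 0 := fun h => hdeg (by rw [← hPcoeff (4 * n) le_rfl, h, Polynomial.coeff_zero])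
  have hPdeg : P.natDegree = 4 * n :=
    le_antisymm (Polynomial.natDegree_le_iff_coeff_eq_zero.mpr hPcoeff0)
      (Polynomial.le_natDegree_of_ne_zero (by rw [hPcoeff _ le_rfl]; exact hdeg))
  have hDcoeff : D.coeff (6 * (m - 1)) = 1 := by
    rw [hD, Polynomial.finset_sum_coeff]
    rw [Finset.sum_eq_single (m - 1)]
    · simp [Polynomial.coeff_X_pow]
    · intro b hb hbne
      simp only [Finset.mem_range] at hb
      simp only [Polynomial.coeff_X_pow]
      rw [if_neg]; omega
    · intro h; exact absurd (Finset.mem_range.mpr (by omega)) h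
  have hDdegle : D.natDegree ≤ 6 * (m - 1) := by
    rw [hD]
    apply Polynomial.natDegree_sum_le_of_forall_le
    intro i hi
    simp only [Finset.mem_range] at hi
    rw [Polynomial.natDegree_X_pow]
    omega
  have hDdeg : D.natDegree = 6 * (m - 1) :=
    le_antisymm hDdegle (Polynomial.le_natDegree_of_ne_zero (by rw [hDcoeff]; exact one_ne_zero))
  have hDne : D ≠ 0 := fun h => by simp [h] at hDcoeff
  have hQne : Q ≠ 0 := fun h => hPne (by rw [hQ, h, mul_zero])
  have hQdeg : Q.natDegree = 8 := by
    have h := Polynomial.natDegree_mul hDne hQne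
    rw [← hQ, hPdeg, hDdeg] at h
    omega
  have hQ0 : ∀ j, 8 < j → Q.coeff j = 0 := fun j hj =>
    Polynomial.coeff_eq_zero_of_natDegree_lt (by omega)
  have key : ∀ k, P.coeff k =
      ∑ i ∈ Finset.range m, if 6 * i ≤ k then Q.coeff (k - 6 * i) else 0 := by
    intro k
    rw [hQ, hD, Finset.sum_mul, Polynomial.finset_sum_coeff]
    refine Finset.sum_congr rfl fun i _ => ?_
    rw [mul_comm, Polynomial.coeff_mul_X_pow']
  have ha1 : a 1 = Q.coeff 1 := by
    rw [← hPcoeff 1 (by omega), key]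
    rw [Finset.sum_eq_single 0]
    · simp
    · intro b hb hbne; rw [if_neg]; omega
    · intro h; exact absurd (Finset.mem_range.mpr (by omega)) h
  have ha7 : a 7 = Q.coeff 7 + Q.coeff 1 := by
    rw [← hPcoeff 7 (by omega), key]
    rw [← Finset.sum_range_add_sum_Ico _ (show 2 ≤ m by omega)]
    have h2 : ∑ i ∈ Finset.Ico 2 m, (if 6 * i ≤ 7 then Q.coeff (7 - 6 * i) else 0) = 0 := by
      apply Finset.sum_eq_zero
      intro b hb
      simp only [Finset.mem_Ico] at hb
      rw [if_neg]; omega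
    rw [h2, add_zero, Finset.sum_range_succ, Finset.sum_range_one]
    norm_num
  have ha' : a (4 * n - 1) = Q.coeff 7 := by
    rw [← hPcoeff (4 * n - 1) (by omega), key]
    rw [Finset.sum_eq_single (m - 1)]
    · rw [if_pos (by omega)]; congr 1; omega
    · intro b hb hbne
      simp only [Finset.mem_range] at hb
      split
      · exact hQ0 _ (by omega)
      · rfl
    · intro h; exact absurd (Finset.mem_range.mpr (by omega)) h
  have hpal1 := hpal 1 (by omega)
  rw [ha7, ← ha', ← hpal1, ha1]
  ring
end

section
/- Define P_2(z) = (1 - 4z + 13z² - 32z³ + 44z⁴ - 32z⁵ + 13z⁶ - 4z⁷ + z⁸)(1-z)⁴ and N(z) = (1-z²)(1+z²)(1+z⁴)(z⁴ - z² + 1)(1 + z² + z⁴)·(z^{24} + 3z^{22} + 3z^{20} + 2z^{18} + 2z^{16} + 3z^{14} + 3z^{12} + z^{10} + z^{6} + z^{4} + 1)·P_2(z). Then N(z) is not divisible by 1 - z^{24} in ℚ[z]. -/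
open Polynomial

noncomputable def Qaux : Polynomial ℚ := -3925 + 4224 * X - 4158 * X ^ 2 + 3760 * X ^ 3 - 3076 * X ^ 4 + 2160 * X ^ 5 - 1079 * X ^ 6 - 120 * X ^ 7 + 1418 * X ^ 8 - 2744 * X ^ 9 + 3928 * X ^ 10 - 4808 * X ^ 11 + 5346 * X ^ 12 - 5608 * X ^ 13 + 5684 * X ^ 14 - 5624 * X ^ 15 + 5418 * X ^ 16 - 5048 * X ^ 17 + 4535 * X ^ 18 - 3904 * X ^ 19 + 3153 * X ^ 20 - 2312 * X ^ 21 + 1492 * X ^ 22 - 824 * X ^ 23 + 376 * X ^ 24 - 136 * X ^ 25 + 38 * X ^ 26 - 8 * X ^ 27 + X ^ 28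

noncomputable def Raux : Polynomial ℚ := 3926 - 4232 * X + 4193 * X ^ 2 - 3872 * X ^ 3 + 3345 * X ^ 4 - 2632 * X ^ 5 + 1696 * X ^ 6 - 568 * X ^ 7 - 581 * X ^ 8 + 1600 * X ^ 9 - 2497 * X ^ 10 + 3304 * X ^ 11 - 3926 * X ^ 12 + 4232 * X ^ 13 - 4193 * X ^ 14 + 3872 * X ^ 15 - 3345 * X ^ 16 + 2632 * X ^ 17 - 1696 * X ^ 18 + 568 * X ^ 19 + 581 * X ^ 20 - 1600 * X ^ 21 + 2497 * X ^ 22 - 3304 * X ^ 23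

lemma Raux_ne_zero : Raux ≠ 0 := by
  intro h
  have h0 : Raux.eval 0 = 3926 := by norm_num [Raux]
  rw [h] at h0
  norm_num at h0

lemma Raux_natDegree_le : Raux.natDegree ≤ 23 := by
  unfold Raux
  compute_degree

lemma d_natDegree : (1 - (X : Polynomial ℚ) ^ 24).natDegree = 24 := by
  compute_degree!

/-- The numerator `N(z)` appearing in the `n = 2` case of the stringy E-function
computation is not divisible by `1 - z^{24}` in `ℚ[z]`. -/
theorem stmt_11 :
    ¬ ((1 - (X : Polynomial ℚ) ^ 24) ∣
      ((1 - X ^ 2) * (1 + X ^ 2) * (1 + X ^ 4) * (X ^ 4 - X ^ 2 + 1) * (1 + X ^ 2 + X ^ 4) *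
        (X ^ 24 + 3 * X ^ 22 + 3 * X ^ 20 + 2 * X ^ 18 + 2 * X ^ 16 + 3 * X ^ 14 +
          3 * X ^ 12 + X ^ 10 + X ^ 6 + X ^ 4 + 1) *
        ((1 - 4 * X + 13 * X ^ 2 - 32 * X ^ 3 + 44 * X ^ 4 - 32 * X ^ 5 + 13 * X ^ 6 -
          4 * X ^ 7 + X ^ 8) * (1 - X) ^ 4))) := by
  intro h
  have key : ((1 - X ^ 2) * (1 + X ^ 2) * (1 + X ^ 4) * (X ^ 4 - X ^ 2 + 1) * (1 + X ^ 2 + X ^ 4) *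
        (X ^ 24 + 3 * X ^ 22 + 3 * X ^ 20 + 2 * X ^ 18 + 2 * X ^ 16 + 3 * X ^ 14 +
          3 * X ^ 12 + X ^ 10 + X ^ 6 + X ^ 4 + 1) *
        ((1 - 4 * X + 13 * X ^ 2 - 32 * X ^ 3 + 44 * X ^ 4 - 32 * X ^ 5 + 13 * X ^ 6 -
          4 * X ^ 7 + X ^ 8) * (1 - X) ^ 4) : Polynomial ℚ)
      = (1 - X ^ 24) * Qaux + Raux := by
    unfold Qaux Raux
    ring
  rw [key] at h
  have hR : (1 - (X : Polynomial ℚ) ^ 24) ∣ Raux := (dvd_add_right (Dvd.intro _ rfl)).mp h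
  have hle := Polynomial.natDegree_le_of_dvd hR Raux_ne_zero
  rw [d_natDegree] at hle
  exact absurd (hle.trans Raux_natDegree_le) (by norm_num)
end

section
/- Let n ≥ 2 satisfy 3 ∤ (2n-1), and suppose Q(z) ∈ ℤ[z] is palindromic of degree 4n with Q = P(J^{[n]}×Ĵ; z) = (1-z)⁴ · P(J^{[n]}; z) where P(J^{[n]};z) is given by Göttsche's formula. Then (1 - z^{2(2n-1)})/(1 - z²) does not divide P(J^{[n]}; z). -/
open Finset PowerSeries

/-- `z^m t^k` as a power series in `t` with polynomial coefficients in `z`. -/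
noncomputable def zt (m k : ℕ) : PowerSeries (Polynomial ℤ) :=
  PowerSeries.C (R := Polynomial ℤ) (Polynomial.X ^ m) * PowerSeries.X ^ k

/-- The numerator `∏_{k=1}^{N} (1 - z^{2k-1}t^k)^4 (1 - z^{2k+1}t^k)^4` of the truncated
Göttsche product for an abelian surface (factors with `(-1)^{i+1}b_i > 0`). -/
noncomputable def gottscheNum (N : ℕ) : PowerSeries (Polynomial ℤ) :=
  ∏ k ∈ Finset.Icc 1 N, ((1 - zt (2 * k - 1) k) ^ 4 * (1 - zt (2 * k + 1) k) ^ 4)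

/-- The denominator `∏_{k=1}^{N} (1 - z^{2k-2}t^k)(1 - z^{2k}t^k)^6 (1 - z^{2k+2}t^k)`
of the truncated Göttsche product for an abelian surface. -/
noncomputable def gottscheDen (N : ℕ) : PowerSeries (Polynomial ℤ) :=
  ∏ k ∈ Finset.Icc 1 N,
    ((1 - zt (2 * k - 2) k) * (1 - zt (2 * k) k) ^ 6 * (1 - zt (2 * k + 2) k))

/- ======================  Auxiliary machinery  ====================== -/

lemma coeff_zt (m k j : ℕ) :
    PowerSeries.coeff (R := Polynomial ℤ) j (zt m k) = if j = k then Polynomial.X ^ m else 0 := by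
  rw [zt]; exact PowerSeries.coeff_C_mul_X_pow _ _ _

lemma constantCoeff_zt {k : ℕ} (hk : 1 ≤ k) (m : ℕ) :
    PowerSeries.constantCoeff (R := Polynomial ℤ) (zt m k) = 0 := by
  rw [zt]
  simp [PowerSeries.constantCoeff_X, zero_pow (by omega : k ≠ 0)]

/-- The weight condition: the `t^k` coefficient has `z`-degree at most `4k`. -/
def Wd (F : PowerSeries (Polynomial ℤ)) : Prop :=
  ∀ k, (PowerSeries.coeff (R := Polynomial ℤ) k F).natDegree ≤ 4 * k

lemma Wd_one : Wd 1 := by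
  intro k
  rw [PowerSeries.coeff_one]
  split <;> simp

lemma Wd_mul {F G : PowerSeries (Polynomial ℤ)} (hF : Wd F) (hG : Wd G) : Wd (F * G) := by
  intro k
  rw [PowerSeries.coeff_mul]
  apply Polynomial.natDegree_sum_le_of_forall_le
  intro p hp
  rw [Finset.HasAntidiagonal.mem_antidiagonal] at hp
  refine le_trans Polynomial.natDegree_mul_le ?_
  have h1 := hF p.1
  have h2 := hG p.2
  omega

lemma Wd_pow {F : PowerSeries (Polynomial ℤ)} (hF : Wd F) (m : ℕ) : Wd (F ^ m) := by
  induction m with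
  | zero => simpa using Wd_one
  | succ m ih => rw [pow_succ]; exact Wd_mul ih hF

lemma Wd_factor {m k : ℕ} (hk : 1 ≤ k) (hm : m ≤ 4 * k) : Wd (1 - zt m k) := by
  intro j
  rw [map_sub, coeff_zt, PowerSeries.coeff_one]
  by_cases hj : j = k
  · subst hj
    rw [if_pos rfl, if_neg (by omega)]
    simpa using hm
  · rw [if_neg hj]
    by_cases hj0 : j = 0 <;> simp [hj0]

lemma Wd_den (n : ℕ) : Wd (gottscheDen n) := by
  rw [gottscheDen]
  refine Finset.prod_induction _ Wd (fun a b ha hb => Wd_mul ha hb) Wd_one ?_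
  intro k hk
  rw [Finset.mem_Icc] at hk
  exact Wd_mul (Wd_mul (Wd_factor hk.1 (by omega)) (Wd_pow (Wd_factor hk.1 (by omega)) 6))
    (Wd_factor hk.1 (by omega))

lemma Wd_num (n : ℕ) : Wd (gottscheNum n) := by
  rw [gottscheNum]
  refine Finset.prod_induction _ Wd (fun a b ha hb => Wd_mul ha hb) Wd_one ?_
  intro k hk
  rw [Finset.mem_Icc] at hk
  exact Wd_mul (Wd_pow (Wd_factor hk.1 (by omega)) 4) (Wd_pow (Wd_factor hk.1 (by omega)) 4)

lemma constantCoeff_den (n : ℕ) :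
    PowerSeries.constantCoeff (R := Polynomial ℤ) (gottscheDen n) = 1 := by
  rw [gottscheDen, map_prod]
  apply Finset.prod_eq_one
  intro k hk
  rw [Finset.mem_Icc] at hk
  simp [constantCoeff_zt hk.1]

lemma Wd_G (n : ℕ) (G : PowerSeries (Polynomial ℤ)) (hG : G * gottscheDen n = gottscheNum n) :
    Wd G := by
  intro k
  induction k using Nat.strong_induction_on with
  | _ k ih =>
    have h1 : PowerSeries.coeff (R := Polynomial ℤ) k (gottscheNum n)
        = ∑ i ∈ Finset.range (k + 1),
          PowerSeries.coeff (R := Polynomial ℤ) i G *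
            PowerSeries.coeff (R := Polynomial ℤ) (k - i) (gottscheDen n) := by
      rw [← hG, PowerSeries.coeff_mul, Finset.Nat.sum_antidiagonal_eq_sum_range_succ_mk]
    rw [Finset.sum_range_succ, Nat.sub_self, PowerSeries.coeff_zero_eq_constantCoeff_apply,
      constantCoeff_den, mul_one] at h1
    have h2 : PowerSeries.coeff (R := Polynomial ℤ) k G
        = PowerSeries.coeff (R := Polynomial ℤ) k (gottscheNum n)
          - ∑ i ∈ Finset.range k, PowerSeries.coeff (R := Polynomial ℤ) i G *
              PowerSeries.coeff (R := Polynomial ℤ) (k - i) (gottscheDen n) := by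
      rw [h1]; ring
    rw [h2]
    refine le_trans (Polynomial.natDegree_sub_le _ _) (max_le (Wd_num n k) ?_)
    apply Polynomial.natDegree_sum_le_of_forall_le
    intro i hi
    rw [Finset.mem_range] at hi
    refine le_trans Polynomial.natDegree_mul_le ?_
    have h3 := ih i hi
    have h4 := Wd_den n (k - i)
    omega

/- ======================  The quotient ring ℤ[z]/(z⁴)  ====================== -/

noncomputable abbrev RQ : Type := Polynomial ℤ ⧸ Ideal.span ({Polynomial.X ^ 4} : Set (Polynomial ℤ))

noncomputable abbrev fq : Polynomial ℤ →+* RQ := Ideal.Quotient.mk _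

noncomputable def eps : RQ := fq Polynomial.X

lemma eps_pow {m : ℕ} (hm : 4 ≤ m) : eps ^ m = 0 := by
  have h4 : eps ^ 4 = 0 := by
    rw [eps, ← map_pow, Ideal.Quotient.eq_zero_iff_mem]
    exact Ideal.subset_span (Set.mem_singleton _)
  calc eps ^ m = eps ^ 4 * eps ^ (m - 4) := by rw [← pow_add]; congr 1; omega
  _ = 0 := by rw [h4, zero_mul]

lemma fq_coeff_eq {p q : Polynomial ℤ} (h : fq p = fq q) {i : ℕ} (hi : i < 4) :
    p.coeff i = q.coeff i := by
  have hd : Polynomial.X ^ 4 ∣ p - q := by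
    rw [← Ideal.mem_span_singleton]
    exact Ideal.Quotient.eq.mp h
  obtain ⟨s, hs⟩ := hd
  have h2 := congrArg (fun r => Polynomial.coeff r i) hs
  simp only [Polynomial.coeff_sub] at h2
  rw [mul_comm, Polynomial.coeff_mul_X_pow', if_neg (by omega)] at h2
  omega

noncomputable def cq : PowerSeries RQ := PowerSeries.C (R := RQ) eps

lemma cq_pow {m : ℕ} (hm : 4 ≤ m) : cq ^ m = 0 := by
  rw [cq, ← map_pow, eps_pow hm, map_zero]

lemma map_zt' (m k : ℕ) : PowerSeries.map fq (zt m k) = cq ^ m * PowerSeries.X ^ k := by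
  rw [zt, cq]
  simp [PowerSeries.map_C, eps, map_pow]

lemma map_den {n : ℕ} (hn : 3 ≤ n) :
    PowerSeries.map fq (gottscheDen n)
      = (1 - PowerSeries.X) *
        ((1 - cq ^ 2 * PowerSeries.X) ^ 6 * (1 - cq ^ 2 * PowerSeries.X ^ 2)) := by
  rw [gottscheDen, map_prod]
  rw [show Finset.Icc 1 n = Finset.Icc 1 2 ∪ Finset.Ioc 2 n from by
    ext x; rw [Finset.mem_union, Finset.mem_Icc, Finset.mem_Icc, Finset.mem_Ioc]; omega]
  rw [Finset.prod_union (by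
    rw [Finset.disjoint_left]
    intro a ha hb
    rw [Finset.mem_Icc] at ha
    rw [Finset.mem_Ioc] at hb
    omega)]
  have h1 : (∏ k ∈ Finset.Ioc 2 n, PowerSeries.map fq
      ((1 - zt (2 * k - 2) k) * (1 - zt (2 * k) k) ^ 6 * (1 - zt (2 * k + 2) k))) = 1 := by
    apply Finset.prod_eq_one
    intro k hk
    rw [Finset.mem_Ioc] at hk
    simp only [map_mul, map_pow, map_sub, map_one, map_zt']
    rw [cq_pow (by omega : 4 ≤ 2 * k - 2), cq_pow (by omega : 4 ≤ 2 * k),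
      cq_pow (by omega : 4 ≤ 2 * k + 2)]
    simp
  rw [h1, mul_one]
  rw [show (Finset.Icc 1 2 : Finset ℕ) = {1, 2} from rfl]
  rw [Finset.prod_insert (by norm_num), Finset.prod_singleton]
  simp only [map_mul, map_pow, map_sub, map_one, map_zt']
  norm_num
  rw [cq_pow (by norm_num : (4:ℕ) ≤ 4), cq_pow (by norm_num : (4:ℕ) ≤ 6)]
  ring

lemma map_num {n : ℕ} (hn : 3 ≤ n) :
    PowerSeries.map fq (gottscheNum n)
      = (1 - cq * PowerSeries.X) ^ 4 *
        ((1 - cq ^ 3 * PowerSeries.X) ^ 4 * (1 - cq ^ 3 * PowerSeries.X ^ 2) ^ 4) := by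
  rw [gottscheNum, map_prod]
  rw [show Finset.Icc 1 n = Finset.Icc 1 2 ∪ Finset.Ioc 2 n from by
    ext x; rw [Finset.mem_union, Finset.mem_Icc, Finset.mem_Icc, Finset.mem_Ioc]; omega]
  rw [Finset.prod_union (by
    rw [Finset.disjoint_left]
    intro a ha hb
    rw [Finset.mem_Icc] at ha
    rw [Finset.mem_Ioc] at hb
    omega)]
  have h1 : (∏ k ∈ Finset.Ioc 2 n, PowerSeries.map fq
      ((1 - zt (2 * k - 1) k) ^ 4 * (1 - zt (2 * k + 1) k) ^ 4)) = 1 := by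
    apply Finset.prod_eq_one
    intro k hk
    rw [Finset.mem_Ioc] at hk
    simp only [map_mul, map_pow, map_sub, map_one, map_zt']
    rw [cq_pow (by omega : 4 ≤ 2 * k - 1), cq_pow (by omega : 4 ≤ 2 * k + 1)]
    simp
  rw [h1, mul_one]
  rw [show (Finset.Icc 1 2 : Finset ℕ) = {1, 2} from rfl]
  rw [Finset.prod_insert (by norm_num), Finset.prod_singleton]
  simp only [map_mul, map_pow, map_sub, map_one, map_zt']
  norm_num
  rw [cq_pow (by norm_num : (4:ℕ) ≤ 5)]
  ring

set_option maxHeartbeats 2000000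
lemma reflect_sub' (N : ℕ) (f g : Polynomial ℤ) :
    Polynomial.reflect N (f - g) = Polynomial.reflect N f - Polynomial.reflect N g := by
  ext i
  simp [Polynomial.coeff_reflect]

lemma reflect_one_sub_X_pow4 :
    Polynomial.reflect 4 ((1 - Polynomial.X : Polynomial ℤ) ^ 4)
      = (1 - Polynomial.X : Polynomial ℤ) ^ 4 := by
  have hdeg1 : (1 - Polynomial.X : Polynomial ℤ).natDegree ≤ 1 :=
    le_trans (Polynomial.natDegree_sub_le _ _) (by simp)
  have hr1 : Polynomial.reflect 1 (1 - Polynomial.X : Polynomial ℤ)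
      = Polynomial.X - 1 := by
    rw [reflect_sub', Polynomial.reflect_one, Polynomial.reflect_one_X, pow_one]
  have hdeg2 : ((1 - Polynomial.X : Polynomial ℤ) ^ 2).natDegree ≤ 2 :=
    le_trans (Polynomial.natDegree_pow_le) (by omega)
  have hr2 : Polynomial.reflect 2 ((1 - Polynomial.X : Polynomial ℤ) ^ 2)
      = (Polynomial.X - 1 : Polynomial ℤ) ^ 2 := by
    rw [pow_two, show (2:ℕ) = 1 + 1 from rfl,
      Polynomial.reflect_mul _ _ hdeg1 hdeg1, hr1, ← pow_two]
  have hr4 : Polynomial.reflect 4 ((1 - Polynomial.X : Polynomial ℤ) ^ 4)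
      = (Polynomial.X - 1 : Polynomial ℤ) ^ 4 := by
    rw [show ((1 - Polynomial.X : Polynomial ℤ) ^ 4)
        = (1 - Polynomial.X) ^ 2 * (1 - Polynomial.X) ^ 2 from by ring,
      show (4:ℕ) = 2 + 2 from rfl, Polynomial.reflect_mul _ _ hdeg2 hdeg2, hr2]
    ring
  rw [hr4]; ring

/-- Let `n ≥ 2` with `3 ∤ 2n-1`, and let `P = P(J^{[n]}; z)` be the signed Poincaré
polynomial of the Hilbert scheme of `n` points on an abelian surface, given by
Göttsche's formula (the `t^n`-coefficient of the Göttsche series `G`). If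
`Q = P(J^{[n]} × Ĵ; z) = (1-z)⁴·P` is palindromic, then
`(1 - z^{2(2n-1)})/(1 - z²) = 1 + z² + ⋯ + z^{2(2n-2)}` does not divide `P`. -/
theorem stmt_12 (n : ℕ) (hn : 2 ≤ n) (h3 : ¬ (3 ∣ (2 * n - 1)))
    (G : PowerSeries (Polynomial ℤ))
    (hG : G * gottscheDen n = gottscheNum n)
    (Q : Polynomial ℤ)
    (hQ : Q = (1 - Polynomial.X) ^ 4 * PowerSeries.coeff (R := Polynomial ℤ) n G)
    (hQpal : ∀ i ≤ 4 * n + 4, Q.coeff i = Q.coeff (4 * n + 4 - i)) :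
    ¬ ((∑ i ∈ Finset.range (2 * n - 1), (Polynomial.X : Polynomial ℤ) ^ (2 * i)) ∣
        PowerSeries.coeff (R := Polynomial ℤ) n G) := by
  intro hdvd
  have hn3 : 3 ≤ n := by
    by_contra hcon
    have hn2 : n = 2 := by omega
    subst hn2
    exact h3 ⟨1, by norm_num⟩
  set P : Polynomial ℤ := PowerSeries.coeff (R := Polynomial ℤ) n G with hP
  set D : Polynomial ℤ := ∑ i ∈ Finset.range (2 * n - 1), Polynomial.X ^ (2 * i) with hD
  -- Step 1: the coefficients of P in degrees 1 and 3, via the quotient ring mod z⁴.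
  have hcq4 : cq ^ 4 = 0 := cq_pow (le_refl 4)
  have hE : ((1 - cq ^ 2 * X) ^ 6 * (1 - cq ^ 2 * X ^ 2)) *
      ((1 + 6 * cq ^ 2 * X) * (1 + cq ^ 2 * X ^ 2)) = (1 : PowerSeries RQ) := by
    linear_combination ((-21 : PowerSeries RQ) * X ^ 2 + (-1 : PowerSeries RQ) * X ^ 4 + (70 : PowerSeries RQ) * cq ^ 2 * X ^ 3 + (-105 : PowerSeries RQ) * cq ^ 4 * X ^ 4 + (21 : PowerSeries RQ) * cq ^ 4 * X ^ 6 + (84 : PowerSeries RQ) * cq ^ 6 * X ^ 5 + (-70 : PowerSeries RQ) * cq ^ 6 * X ^ 7 + (-35 : PowerSeries RQ) * cq ^ 8 * X ^ 6 + (105 : PowerSeries RQ) * cq ^ 8 * X ^ 8 + (6 : PowerSeries RQ) * cq ^ 10 * X ^ 7 + (-84 : PowerSeries RQ) * cq ^ 10 * X ^ 9 + (35 : PowerSeries RQ) * cq ^ 12 * X ^ 10 + (-6 : PowerSeries RQ) * cq ^ 14 * X ^ 11) * hcq4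
  have hGX : PowerSeries.map fq G * (1 - X)
      = 1 + (6 * cq ^ 2 - 4 * cq - 4 * cq ^ 3) * X + (7 * cq ^ 2 - 28 * cq ^ 3) * X ^ 2
          + (-8 * cq ^ 3) * X ^ 3 := by
    have h0 : PowerSeries.map fq G *
        ((1 - X) * ((1 - cq ^ 2 * X) ^ 6 * (1 - cq ^ 2 * X ^ 2)))
        = (1 - cq * X) ^ 4 * ((1 - cq ^ 3 * X) ^ 4 * (1 - cq ^ 3 * X ^ 2) ^ 4) := by
      rw [← map_den hn3, ← map_num hn3, ← map_mul, hG]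
    calc PowerSeries.map fq G * (1 - X)
        = PowerSeries.map fq G * ((1 - X) * (((1 - cq ^ 2 * X) ^ 6 * (1 - cq ^ 2 * X ^ 2)) *
            ((1 + 6 * cq ^ 2 * X) * (1 + cq ^ 2 * X ^ 2)))) := by rw [hE, mul_one]
      _ = (PowerSeries.map fq G * ((1 - X) * ((1 - cq ^ 2 * X) ^ 6 * (1 - cq ^ 2 * X ^ 2))))
            * ((1 + 6 * cq ^ 2 * X) * (1 + cq ^ 2 * X ^ 2)) := by ring
      _ = ((1 - cq * X) ^ 4 * ((1 - cq ^ 3 * X) ^ 4 * (1 - cq ^ 3 * X ^ 2) ^ 4))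
            * ((1 + 6 * cq ^ 2 * X) * (1 + cq ^ 2 * X ^ 2)) := by rw [h0]
      _ = _ := by linear_combination ((16 : PowerSeries RQ) * X ^ 2 + (58 : PowerSeries RQ) * X ^ 3 + (7 : PowerSeries RQ) * X ^ 4 + (-24 : PowerSeries RQ) * cq ^ 1 * X ^ 2 + (-52 : PowerSeries RQ) * cq ^ 1 * X ^ 3 + (-76 : PowerSeries RQ) * cq ^ 1 * X ^ 4 + (-4 : PowerSeries RQ) * cq ^ 1 * X ^ 5 + (6 : PowerSeries RQ) * cq ^ 2 * X ^ 2 + (112 : PowerSeries RQ) * cq ^ 2 * X ^ 3 + (134 : PowerSeries RQ) * cq ^ 2 * X ^ 4 + (74 : PowerSeries RQ) * cq ^ 2 * X ^ 5 + (1 : PowerSeries RQ) * cq ^ 2 * X ^ 6 + (-24 : PowerSeries RQ) * cq ^ 3 * X ^ 3 + (-232 : PowerSeries RQ) * cq ^ 3 * X ^ 4 + (-220 : PowerSeries RQ) * cq ^ 3 * X ^ 5 + (-52 : PowerSeries RQ) * cq ^ 3 * X ^ 6 + (36 : PowerSeries RQ) * cq ^ 4 * X ^ 3 + (138 : PowerSeries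 RQ) * cq ^ 4 * X ^ 4 + (340 : PowerSeries RQ) * cq ^ 4 * X ^ 5 + (250 : PowerSeries RQ) * cq ^ 4 * X ^ 6 + (22 : PowerSeries RQ) * cq ^ 4 * X ^ 7 + (-4 : PowerSeries RQ) * cq ^ 5 * X ^ 3 + (-168 : PowerSeries RQ) * cq ^ 5 * X ^ 4 + (-456 : PowerSeries RQ) * cq ^ 5 * X ^ 5 + (-444 : PowerSeries RQ) * cq ^ 5 * X ^ 6 + (-220 : PowerSeries RQ) * cq ^ 5 * X ^ 7 + (-4 : PowerSeries RQ) * cq ^ 5 * X ^ 8 + (16 : PowerSeries RQ) * cq ^ 6 * X ^ 4 + (348 : PowerSeries RQ) * cq ^ 6 * X ^ 5 + (810 : PowerSeries RQ) * cq ^ 6 * X ^ 6 + (476 : PowerSeries RQ) * cq ^ 6 * X ^ 7 + (138 : PowerSeries RQ) * cq ^ 6 * X ^ 8 + (-24 : PowerSeries RQ) * cq ^ 7 * X ^ 4 + (-172 : PowerSeries RQ) * cq ^ 7 * X ^ 5 + (-600 : PowerSeries RQ) * cq ^ 7 * X ^ 6 + (-984 : PowerSeries RQ) * cq ^ 7 *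 X ^ 7 + (-404 : PowerSeries RQ) * cq ^ 7 * X ^ 8 + (-48 : PowerSeries RQ) * cq ^ 7 * X ^ 9 + (1 : PowerSeries RQ) * cq ^ 8 * X ^ 4 + (112 : PowerSeries RQ) * cq ^ 8 * X ^ 5 + (644 : PowerSeries RQ) * cq ^ 8 * X ^ 6 + (1036 : PowerSeries RQ) * cq ^ 8 * X ^ 7 + (967 : PowerSeries RQ) * cq ^ 8 * X ^ 8 + (300 : PowerSeries RQ) * cq ^ 8 * X ^ 9 + (6 : PowerSeries RQ) * cq ^ 8 * X ^ 10 + (-4 : PowerSeries RQ) * cq ^ 9 * X ^ 5 + (-232 : PowerSeries RQ) * cq ^ 9 * X ^ 6 + (-1180 : PowerSeries RQ) * cq ^ 9 * X ^ 7 + (-1384 : PowerSeries RQ) * cq ^ 9 * X ^ 8 + (-724 : PowerSeries RQ) * cq ^ 9 * X ^ 9 + (-172 : PowerSeries RQ) * cq ^ 9 * X ^ 10 + (6 : PowerSeries RQ) * cq ^ 10 * X ^ 5 + (103 : PowerSeries RQ) * cq ^ 10 * X ^ 6 + (520 : PowerSeries RQ) * cq ^ 10 * X ^ 7 + (1516 :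 PowerSeries RQ) * cq ^ 10 * X ^ 8 + (1402 : PowerSeries RQ) * cq ^ 10 * X ^ 9 + (391 : PowerSeries RQ) * cq ^ 10 * X ^ 10 + (52 : PowerSeries RQ) * cq ^ 10 * X ^ 11 + (-28 : PowerSeries RQ) * cq ^ 11 * X ^ 6 + (-416 : PowerSeries RQ) * cq ^ 11 * X ^ 7 + (-1184 : PowerSeries RQ) * cq ^ 11 * X ^ 8 + (-1688 : PowerSeries RQ) * cq ^ 11 * X ^ 9 + (-1184 : PowerSeries RQ) * cq ^ 11 * X ^ 10 + (-200 : PowerSeries RQ) * cq ^ 11 * X ^ 11 + (-4 : PowerSeries RQ) * cq ^ 11 * X ^ 12 + (58 : PowerSeries RQ) * cq ^ 12 * X ^ 7 + (775 : PowerSeries RQ) * cq ^ 12 * X ^ 8 + (1816 : PowerSeries RQ) * cq ^ 12 * X ^ 9 + (1516 : PowerSeries RQ) * cq ^ 12 * X ^ 10 + (730 : PowerSeries RQ) * cq ^ 12 * X ^ 11 + (103 : PowerSeries RQ) * cq ^ 12 * X ^ 12 + (-24 : PowerSeries RQ) * cq ^ 13 * X ^ 7 + (-220 : PowerSeries RQ)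 * cq ^ 13 * X ^ 8 + (-1084 : PowerSeries RQ) * cq ^ 13 * X ^ 9 + (-2008 : PowerSeries RQ) * cq ^ 13 * X ^ 10 + (-1084 : PowerSeries RQ) * cq ^ 13 * X ^ 11 + (-256 : PowerSeries RQ) * cq ^ 13 * X ^ 12 + (-28 : PowerSeries RQ) * cq ^ 13 * X ^ 13 + (102 : PowerSeries RQ) * cq ^ 14 * X ^ 8 + (666 : PowerSeries RQ) * cq ^ 14 * X ^ 9 + (1447 : PowerSeries RQ) * cq ^ 14 * X ^ 10 + (1816 : PowerSeries RQ) * cq ^ 14 * X ^ 11 + (740 : PowerSeries RQ) * cq ^ 14 * X ^ 12 + (58 : PowerSeries RQ) * cq ^ 14 * X ^ 13 + (1 : PowerSeries RQ) * cq ^ 14 * X ^ 14 + (-192 : PowerSeries RQ) * cq ^ 15 * X ^ 9 + (-1124 : PowerSeries RQ) * cq ^ 15 * X ^ 10 + (-1584 : PowerSeries RQ) * cq ^ 15 * X ^ 11 + (-1200 : PowerSeries RQ) * cq ^ 15 * X ^ 12 + (-412 : PowerSeries RQ) * cq ^ 15 * X ^ 13 + (-24 : PowerSeries RQ) * cq ^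 15 * X ^ 14 + (36 : PowerSeries RQ) * cq ^ 16 * X ^ 9 + (330 : PowerSeries RQ) * cq ^ 16 * X ^ 10 + (1322 : PowerSeries RQ) * cq ^ 16 * X ^ 11 + (1386 : PowerSeries RQ) * cq ^ 16 * X ^ 12 + (504 : PowerSeries RQ) * cq ^ 16 * X ^ 13 + (112 : PowerSeries RQ) * cq ^ 16 * X ^ 14 + (6 : PowerSeries RQ) * cq ^ 16 * X ^ 15 + (-148 : PowerSeries RQ) * cq ^ 17 * X ^ 10 + (-604 : PowerSeries RQ) * cq ^ 17 * X ^ 11 + (-1284 : PowerSeries RQ) * cq ^ 17 * X ^ 12 + (-1080 : PowerSeries RQ) * cq ^ 17 * X ^ 13 + (-192 : PowerSeries RQ) * cq ^ 17 * X ^ 14 + (-4 : PowerSeries RQ) * cq ^ 17 * X ^ 15 + (268 : PowerSeries RQ) * cq ^ 18 * X ^ 11 + (826 : PowerSeries RQ) * cq ^ 18 * X ^ 12 + (940 : PowerSeries RQ) * cq ^ 18 * X ^ 13 + (618 : PowerSeries RQ) * cq ^ 18 * X ^ 14 + (96 : PowerSeries RQ) * cq ^ 18 * X ^ 15 + (-24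 : PowerSeries RQ) * cq ^ 19 * X ^ 11 + (-340 : PowerSeries RQ) * cq ^ 19 * X ^ 12 + (-844 : PowerSeries RQ) * cq ^ 19 * X ^ 13 + (-496 : PowerSeries RQ) * cq ^ 19 * X ^ 14 + (-168 : PowerSeries RQ) * cq ^ 19 * X ^ 15 + (-24 : PowerSeries RQ) * cq ^ 19 * X ^ 16 + (97 : PowerSeries RQ) * cq ^ 20 * X ^ 12 + (380 : PowerSeries RQ) * cq ^ 20 * X ^ 13 + (710 : PowerSeries RQ) * cq ^ 20 * X ^ 14 + (268 : PowerSeries RQ) * cq ^ 20 * X ^ 15 + (6 : PowerSeries RQ) * cq ^ 20 * X ^ 16 + (-172 : PowerSeries RQ) * cq ^ 21 * X ^ 13 + (-340 : PowerSeries RQ) * cq ^ 21 * X ^ 14 + (-412 : PowerSeries RQ) * cq ^ 21 * X ^ 15 + (-144 : PowerSeries RQ) * cq ^ 21 * X ^ 16 + (6 : PowerSeries RQ) * cq ^ 22 * X ^ 13 + (199 : PowerSeries RQ) * cq ^ 22 * X ^ 14 + (244 : PowerSeries RQ) * cq ^ 22 * X ^ 15 + (112 : PowerSeries RQ) * cq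 ^ 22 * X ^ 16 + (36 : PowerSeries RQ) * cq ^ 22 * X ^ 17 + (-24 : PowerSeries RQ) * cq ^ 23 * X ^ 14 + (-176 : PowerSeries RQ) * cq ^ 23 * X ^ 15 + (-172 : PowerSeries RQ) * cq ^ 23 * X ^ 16 + (-4 : PowerSeries RQ) * cq ^ 23 * X ^ 17 + (42 : PowerSeries RQ) * cq ^ 24 * X ^ 15 + (103 : PowerSeries RQ) * cq ^ 24 * X ^ 16 + (96 : PowerSeries RQ) * cq ^ 24 * X ^ 17 + (-48 : PowerSeries RQ) * cq ^ 25 * X ^ 16 + (-28 : PowerSeries RQ) * cq ^ 25 * X ^ 17 + (-24 : PowerSeries RQ) * cq ^ 25 * X ^ 18 + (42 : PowerSeries RQ) * cq ^ 26 * X ^ 17 + (1 : PowerSeries RQ) * cq ^ 26 * X ^ 18 + (-24 : PowerSeries RQ) * cq ^ 27 * X ^ 18 + (6 : PowerSeries RQ) * cq ^ 28 * X ^ 19) * hcq4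
  -- coefficients of the image of G
  set A : PowerSeries RQ := 1 + (6 * cq ^ 2 - 4 * cq - 4 * cq ^ 3) * X +
      (7 * cq ^ 2 - 28 * cq ^ 3) * X ^ 2 + (-8 * cq ^ 3) * X ^ 3 with hA
  have e1 : (6 * cq ^ 2 - 4 * cq - 4 * cq ^ 3 : PowerSeries RQ)
      = PowerSeries.C (R := RQ) (6 * eps ^ 2 - 4 * eps - 4 * eps ^ 3) := by
    rw [cq]; simp only [map_sub, map_mul, map_pow, map_ofNat]
  have e2 : (7 * cq ^ 2 - 28 * cq ^ 3 : PowerSeries RQ)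
      = PowerSeries.C (R := RQ) (7 * eps ^ 2 - 28 * eps ^ 3) := by
    rw [cq]; simp only [map_sub, map_mul, map_pow, map_ofNat]
  have e3 : (-8 * cq ^ 3 : PowerSeries RQ) = PowerSeries.C (R := RQ) (-8 * eps ^ 3) := by
    rw [cq]; simp only [map_mul, map_pow, map_neg, map_ofNat]
  have hA0 : PowerSeries.coeff (R := RQ) 0 A = 1 := by
    rw [hA, e1, e2, e3]
    simp only [map_add, PowerSeries.coeff_one, PowerSeries.coeff_C_mul_X_pow,
      PowerSeries.coeff_C_mul, PowerSeries.coeff_X, mul_ite, mul_one, mul_zero]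
    norm_num [PowerSeries.coeff_X_pow]
  have hA1 : PowerSeries.coeff (R := RQ) 1 A = 6 * eps ^ 2 - 4 * eps - 4 * eps ^ 3 := by
    rw [hA, e1, e2, e3]
    simp only [map_add, PowerSeries.coeff_one, PowerSeries.coeff_C_mul_X_pow,
      PowerSeries.coeff_C_mul, PowerSeries.coeff_X, mul_ite, mul_one, mul_zero]
    norm_num [PowerSeries.coeff_X_pow]
  have hA2 : PowerSeries.coeff (R := RQ) 2 A = 7 * eps ^ 2 - 28 * eps ^ 3 := by
    rw [hA, e1, e2, e3]
    simp only [map_add, PowerSeries.coeff_one, PowerSeries.coeff_C_mul_X_pow,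
      PowerSeries.coeff_C_mul, PowerSeries.coeff_X, mul_ite, mul_one, mul_zero]
    norm_num [PowerSeries.coeff_X_pow]
  have hA3 : PowerSeries.coeff (R := RQ) 3 A = -8 * eps ^ 3 := by
    rw [hA, e1, e2, e3]
    simp only [map_add, PowerSeries.coeff_one, PowerSeries.coeff_C_mul_X_pow,
      PowerSeries.coeff_C_mul, PowerSeries.coeff_X, mul_ite, mul_one, mul_zero]
    norm_num [PowerSeries.coeff_X_pow]
  have hAge : ∀ k : ℕ, 4 ≤ k → PowerSeries.coeff (R := RQ) k A = 0 := by
    intro k hk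
    rw [hA, e1, e2, e3]
    simp only [map_add, PowerSeries.coeff_one, PowerSeries.coeff_C_mul_X_pow,
      PowerSeries.coeff_C_mul, PowerSeries.coeff_X, PowerSeries.coeff_X_pow]
    rw [if_neg (by omega), if_neg (by omega), if_neg (by omega), if_neg (by omega)]
    ring
  have hstep : ∀ k : ℕ, PowerSeries.coeff (R := RQ) (k + 1) (PowerSeries.map fq G)
      = PowerSeries.coeff (R := RQ) k (PowerSeries.map fq G) + PowerSeries.coeff (R := RQ) (k + 1) A := by
    intro k
    have h := congrArg (PowerSeries.coeff (R := RQ) (k + 1)) hGX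
    rw [mul_one_sub, map_sub, PowerSeries.coeff_succ_mul_X] at h
    linear_combination h
  have h0g : PowerSeries.coeff (R := RQ) 0 (PowerSeries.map fq G) = 1 := by
    have h := congrArg (PowerSeries.coeff (R := RQ) 0) hGX
    rw [hA0] at h  -- wrong: RHS of h is coeff 0 A only after folding; h RHS is coeff 0 A since hGX RHS = A
    rw [PowerSeries.coeff_zero_eq_constantCoeff_apply, map_mul, map_sub, map_one,
      PowerSeries.constantCoeff_X, sub_zero, mul_one] at h
    exact (PowerSeries.coeff_zero_eq_constantCoeff_apply ((PowerSeries.map fq) G)).trans h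
  have g1 : PowerSeries.coeff (R := RQ) 1 (PowerSeries.map fq G)
      = 1 + (6 * eps ^ 2 - 4 * eps - 4 * eps ^ 3) := by
    have h := hstep 0
    rw [zero_add, h0g, hA1] at h
    exact h
  have g2 : PowerSeries.coeff (R := RQ) 2 (PowerSeries.map fq G)
      = 1 + (6 * eps ^ 2 - 4 * eps - 4 * eps ^ 3) + (7 * eps ^ 2 - 28 * eps ^ 3) := by
    have h := hstep 1
    rw [show (1 : ℕ) + 1 = 2 from rfl, g1, hA2] at h
    exact h
  have g3 : PowerSeries.coeff (R := RQ) 3 (PowerSeries.map fq G)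
      = 1 - 4 * eps + 13 * eps ^ 2 - 40 * eps ^ 3 := by
    have h := hstep 2
    rw [show (2 : ℕ) + 1 = 3 from rfl, g2, hA3] at h
    rw [h]; ring
  have hge3 : ∀ k : ℕ, 3 ≤ k → PowerSeries.coeff (R := RQ) k (PowerSeries.map fq G)
      = 1 - 4 * eps + 13 * eps ^ 2 - 40 * eps ^ 3 := by
    intro k hk
    induction k, hk using Nat.le_induction with
    | base => exact g3
    | succ k hk ih => rw [hstep k, ih, hAge (k + 1) (by omega), add_zero]
  have hfqP : fq P = fq (Polynomial.C 1 + Polynomial.C (-4) * Polynomial.X +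
      Polynomial.C 13 * Polynomial.X ^ 2 + Polynomial.C (-40) * Polynomial.X ^ 3) := by
    have h1 : fq P = PowerSeries.coeff (R := RQ) n (PowerSeries.map fq G) := by
      rw [PowerSeries.coeff_map, hP]
    have fqC : ∀ a : ℤ, fq (Polynomial.C a) = (a : RQ) := fun a => by
      rw [← RingHom.comp_apply]; exact eq_intCast (fq.comp Polynomial.C) a
    rw [h1, hge3 n hn3]
    simp only [map_add, map_mul, map_pow, fqC, show fq Polynomial.X = eps from rfl]
    push_cast
    ring
  have hP1 : P.coeff 1 = -4 := by
    rw [fq_coeff_eq hfqP (by norm_num : (1:ℕ) < 4)]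
    simp [Polynomial.coeff_add, Polynomial.coeff_C, Polynomial.coeff_C_mul,
      Polynomial.coeff_X_pow, Polynomial.coeff_one, Polynomial.coeff_X]
  have hP3 : P.coeff 3 = -40 := by
    rw [fq_coeff_eq hfqP (by norm_num : (3:ℕ) < 4)]
    simp [Polynomial.coeff_add, Polynomial.coeff_C, Polynomial.coeff_C_mul,
      Polynomial.coeff_X_pow, Polynomial.coeff_one, Polynomial.coeff_X]
  -- Step 2: degree bound and palindromicity of P
  have hPdeg : P.natDegree ≤ 4 * n := by rw [hP]; exact Wd_G n G hG n
  have h1X : (1 - Polynomial.X : Polynomial ℤ) ≠ 0 := by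
    intro h
    have h2 : (1 - Polynomial.X : Polynomial ℤ).coeff 1 = -1 := by
      simp [Polynomial.coeff_one, Polynomial.coeff_X]
    rw [h] at h2
    simp at h2
  have hQr : Q.reflect (4 * n + 4) = Q := by
    ext i
    rw [Polynomial.coeff_reflect]
    rcases le_or_gt i (4 * n + 4) with h | h
    · rw [Polynomial.revAt_le h]
      exact (hQpal i h).symm
    · rw [Polynomial.revAt_eq_self_of_lt h]
  have hd4 : ((1 - Polynomial.X : Polynomial ℤ) ^ 4).natDegree ≤ 4 := by
    refine le_trans Polynomial.natDegree_pow_le ?_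
    have h5 : (1 - Polynomial.X : Polynomial ℤ).natDegree ≤ 1 :=
      le_trans (Polynomial.natDegree_sub_le _ _) (by simp)
    omega
  have hPr : Polynomial.reflect (4 * n) P = P := by
    apply mul_left_cancel₀ (pow_ne_zero 4 h1X)
    calc (1 - Polynomial.X : Polynomial ℤ) ^ 4 * Polynomial.reflect (4 * n) P
        = Polynomial.reflect 4 ((1 - Polynomial.X : Polynomial ℤ) ^ 4) *
            Polynomial.reflect (4 * n) P := by rw [reflect_one_sub_X_pow4]
      _ = Polynomial.reflect (4 + 4 * n) ((1 - Polynomial.X : Polynomial ℤ) ^ 4 * P) :=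
          (Polynomial.reflect_mul _ _ hd4 hPdeg).symm
      _ = Polynomial.reflect (4 * n + 4) Q := by rw [hQ, add_comm]
      _ = Q := hQr
      _ = (1 - Polynomial.X : Polynomial ℤ) ^ 4 * P := hQ
  -- Step 3: facts about D
  have hDcoeff : ∀ j : ℕ, D.coeff j = if j % 2 = 0 ∧ j ≤ 4 * n - 4 then 1 else 0 := by
    intro j
    rw [hD, Polynomial.finset_sum_coeff]
    simp only [Polynomial.coeff_X_pow]
    by_cases h : j % 2 = 0 ∧ j ≤ 4 * n - 4
    · rw [if_pos h, Finset.sum_eq_single (j / 2)]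
      · rw [if_pos (by omega)]
      · intro b _ hb
        rw [if_neg (by omega)]
      · intro hmem
        exact absurd (Finset.mem_range.mpr (by omega)) hmem
    · rw [if_neg h, Finset.sum_eq_zero]
      intro i hi
      rw [Finset.mem_range] at hi
      rw [if_neg (by omega)]
  have hDd : D.natDegree = 4 * n - 4 := by
    apply le_antisymm
    · rw [Polynomial.natDegree_le_iff_coeff_eq_zero]
      intro m hm
      rw [hDcoeff m, if_neg (by omega)]
    · apply Polynomial.le_natDegree_of_ne_zero
      rw [hDcoeff, if_pos (by omega)]
      norm_num
  have hDrefl : Polynomial.reflect (4 * n - 4) D = D := by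
    ext j
    rw [Polynomial.coeff_reflect]
    rcases le_or_gt j (4 * n - 4) with h | h
    · rw [Polynomial.revAt_le h, hDcoeff, hDcoeff]
      by_cases hc : j % 2 = 0
      · rw [if_pos (by omega), if_pos (by omega)]
      · rw [if_neg (by omega), if_neg (by omega)]
    · rw [Polynomial.revAt_eq_self_of_lt h]
  have hD0 : D.coeff 0 = 1 := by rw [hDcoeff, if_pos (by omega)]
  have hD0ne : D ≠ 0 := by
    intro h
    rw [h] at hD0
    simp at hD0
  -- Step 4: the contradiction
  obtain ⟨Rp, hRp⟩ := hdvd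
  have hPne : P ≠ 0 := by
    intro h
    rw [h] at hP1
    simp at hP1
  have hRne : Rp ≠ 0 := by
    intro h
    rw [h, mul_zero] at hRp
    exact hPne hRp
  have hdm : P.natDegree = D.natDegree + Rp.natDegree := by
    rw [hRp]
    exact Polynomial.natDegree_mul hD0ne hRne
  have hRdeg : Rp.natDegree ≤ 4 := by omega
  have hPr2 : D * Polynomial.reflect 4 Rp = D * Rp := by
    calc D * Polynomial.reflect 4 Rp
        = Polynomial.reflect (4 * n - 4) D * Polynomial.reflect 4 Rp := by rw [hDrefl]
      _ = Polynomial.reflect (4 * n - 4 + 4) (D * Rp) :=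
          (Polynomial.reflect_mul _ _ (le_of_eq hDd) hRdeg).symm
      _ = Polynomial.reflect (4 * n) P := by rw [show 4 * n - 4 + 4 = 4 * n by omega, ← hRp]
      _ = P := hPr
      _ = D * Rp := hRp
  have hRr : Polynomial.reflect 4 Rp = Rp := mul_left_cancel₀ hD0ne hPr2
  have hR31 : Rp.coeff 3 = Rp.coeff 1 := by
    conv_lhs => rw [← hRr]
    rw [Polynomial.coeff_reflect, Polynomial.revAt_le (by norm_num : (3:ℕ) ≤ 4)]
  have hd0 : D.coeff 0 = 1 := hD0
  have hd1 : D.coeff 1 = 0 := by rw [hDcoeff, if_neg (by omega)]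
  have hd2 : D.coeff 2 = 1 := by rw [hDcoeff, if_pos (by omega)]
  have hd3 : D.coeff 3 = 0 := by rw [hDcoeff, if_neg (by omega)]
  have hc1 : P.coeff 1 = Rp.coeff 1 := by
    rw [hRp, Polynomial.coeff_mul, Finset.Nat.sum_antidiagonal_eq_sum_range_succ_mk]
    simp [Finset.sum_range_succ, hd0, hd1]
  have hc3 : P.coeff 3 = Rp.coeff 3 + Rp.coeff 1 := by
    rw [hRp, Polynomial.coeff_mul, Finset.Nat.sum_antidiagonal_eq_sum_range_succ_mk]
    simp [Finset.sum_range_succ, hd0, hd1, hd2, hd3]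
  have hR1 : Rp.coeff 1 = -4 := by rw [← hc1, hP1]
  rw [hc3, hR31, hR1] at hP3
  norm_num at hP3
end
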